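/- arXiv:1502.07262 — 6 statements merged into one kernel-verified Lean document; each statement's English description precedes it below -/
import Mathlib

section
/- Let A_1, …, A_m be real n×n matrices and let α_1, …, α_m be nonnegative real numbers with α_1 + … + α_m = 1. If the convex combination A_c = α_1 A_1 + … + α_m A_m is Hurwitz, then there exists ε > 0 such that every complex eigenvalue of the matrix M(ε) = exp(ε α_m A_m) · exp(ε α_{m-1} A_{m-1}) · … · exp(ε α_1 A_1) has modulus strictly less than 1. -/
open Filter Matrix Topology
open scoped Pointwise

/-- A real square matrix is Hurwitz if every eigenvalue of its complexification
has strictly negative real part. -/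
def Hurwitz {n : ℕ} (A : Matrix (Fin n) (Fin n) ℝ) : Prop :=
  ∀ μ ∈ spectrum ℂ (A.map (algebraMap ℝ ℂ)), μ.re < 0

section Aux

attribute [local instance] Matrix.linftyOpNormedRing Matrix.linftyOpNormedAlgebra

open NormedSpace

lemma list_exp_prod_hasDerivAt {n : ℕ} (L : List (Matrix (Fin n) (Fin n) ℂ)) :
    HasDerivAt (fun ε : ℝ => (L.map (fun a => exp (ε • a))).prod) L.sum 0 := by
  induction L with
  | nil =>
    simp only [List.map_nil, List.prod_nil, List.sum_nil]
    exact hasDerivAt_const (0 : ℝ) (1 : Matrix (Fin n) (Fin n) ℂ)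
  | cons a L ih =>
      have h1 : HasDerivAt (fun ε : ℝ => exp (ε • a)) a 0 := by
        have h0 := hasDerivAt_exp_smul_const (𝕂 := ℝ) a (0 : ℝ)
        simp only [zero_smul, exp_zero, one_mul] at h0
        exact h0
      have h2 := h1.mul ih
      have e1 : exp ((0 : ℝ) • a) = 1 := by simp [exp_zero]
      have e2 : (L.map fun b => exp ((0 : ℝ) • b)).prod = 1 := by
        have : (L.map fun b => exp ((0 : ℝ) • b)) = L.map fun _ => 1 := by
          simp [exp_zero]
        rw [this]
        simp [List.prod_eq_one]
      simp only [e1, e2, mul_one, one_mul] at h2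
      simp only [List.map_cons, List.prod_cons, List.sum_cons]
      exact h2

lemma main_aux {n m : ℕ}
    (A : Fin m → Matrix (Fin n) (Fin n) ℝ) (α : Fin m → ℝ)
    (hc : Hurwitz (∑ j, α j • A j)) :
    ∃ ε > (0 : ℝ), ∀ μ ∈ spectrum ℂ
      ((((List.ofFn fun j : Fin m =>
          NormedSpace.exp ((ε * α j) • A j)).reverse).prod).map (algebraMap ℝ ℂ)),
      ‖μ‖ < 1 := by
  classical
  set φ : Matrix (Fin n) (Fin n) ℝ →+* Matrix (Fin n) (Fin n) ℂ :=
    (algebraMap ℝ ℂ).mapMatrix with hφ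
  have hφc : Continuous φ := by
    simpa [hφ, RingHom.mapMatrix] using
      (Continuous.matrix_map (continuous_id) (continuous_algebraMap ℝ ℂ) :
        Continuous fun M : Matrix (Fin n) (Fin n) ℝ => M.map (algebraMap ℝ ℂ))
  set Lc : List (Matrix (Fin n) (Fin n) ℂ) :=
    (List.ofFn fun j : Fin m => α j • φ (A j)).reverse with hLc
  set Ac : Matrix (Fin n) (Fin n) ℂ := ∑ j, α j • φ (A j) with hAc
  -- the matrix in the statement equals the product of exponentials of Lc
  have key : ∀ ε : ℝ,
      (((List.ofFn fun j : Fin m =>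
          NormedSpace.exp ((ε * α j) • A j)).reverse).prod).map (algebraMap ℝ ℂ)
        = (Lc.map fun a => exp (ε • a)).prod := by
    intro ε
    have h1 : (((List.ofFn fun j : Fin m =>
        NormedSpace.exp ((ε * α j) • A j)).reverse).prod).map (algebraMap ℝ ℂ)
        = φ ((List.ofFn fun j : Fin m => exp ((ε * α j) • A j)).reverse).prod := rfl
    rw [h1, map_list_prod]
    congr 1
    rw [hLc]
    simp only [List.map_reverse, List.map_ofFn]
    congr 2
    funext j
    simp only [Function.comp_apply]
    refine (map_exp φ hφc _).trans ?_
    congr 1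
    ext i k
    simp only [hφ, RingHom.mapMatrix_apply, Matrix.map_apply, Matrix.smul_apply,
      Complex.real_smul, Complex.coe_algebraMap]
    push_cast [smul_eq_mul]
    ring
  -- spectrum hypothesis transported
  have hAcspec : ∀ μ ∈ spectrum ℂ Ac, μ.re < 0 := by
    intro μ hμ
    apply hc
    convert hμ using 2
    rw [hAc]
    have : ((∑ j, α j • A j).map (algebraMap ℝ ℂ)) = φ (∑ j, α j • A j) := rfl
    rw [this, map_sum]
    congr 1
    funext j
    ext i k
    simp [hφ, RingHom.mapMatrix_apply, Matrix.map_apply, Matrix.smul_apply, Complex.real_smul]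
  have hsumLc : Lc.sum = Ac := by
    rw [hLc, List.sum_reverse, List.sum_ofFn, hAc]
  -- derivative
  have hderiv : HasDerivAt (fun ε : ℝ => (Lc.map fun a => exp (ε • a)).prod) Ac 0 := by
    rw [← hsumLc]; exact list_exp_prod_hasDerivAt Lc
  set Mc : ℝ → Matrix (Fin n) (Fin n) ℂ := fun ε => (Lc.map fun a => exp (ε • a)).prod
    with hMc
  have hMc0 : Mc 0 = 1 := by
    rw [hMc]
    simp only [zero_smul, exp_zero]
    simp [List.prod_eq_one]
  have hslope : Tendsto (slope Mc 0) (𝓝[>] (0:ℝ)) (𝓝 Ac) := by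
    refine (hasDerivAt_iff_tendsto_slope.mp hderiv).mono_left (nhdsWithin_mono _ ?_)
    intro x hx
    exact ne_of_gt hx
  set B : ℝ → Matrix (Fin n) (Fin n) ℂ := slope Mc 0 with hB
  -- choose δ
  obtain ⟨δ, hδ, hδs⟩ : ∃ δ > (0:ℝ), ∀ z ∈ spectrum ℂ Ac, z.re < -δ := by
    rcases Set.eq_empty_or_nonempty (spectrum ℂ Ac) with h | h
    · exact ⟨1, one_pos, by simp [h]⟩
    · obtain ⟨z0, hz0, hmax⟩ := (spectrum.isCompact Ac).exists_isMaxOn h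
        Complex.continuous_re.continuousOn
      refine ⟨-z0.re / 2, by linarith [hAcspec z0 hz0], fun z hz => ?_⟩
      have hle : z.re ≤ z0.re := hmax hz
      have := hAcspec z0 hz0
      linarith
  set R : ℝ := (‖Ac‖ + 1) * ‖(1 : Matrix (Fin n) (Fin n) ℂ)‖ + 1 with hR
  have hR0 : 0 < R := by positivity
  set K : Set ℂ := Metric.closedBall 0 R ∩ {z : ℂ | -δ ≤ z.re} with hK
  have hKc : IsCompact K :=
    (isCompact_closedBall 0 R).inter_right (isClosed_Ici.preimage Complex.continuous_re)
  set u : Set (ℂ × Matrix (Fin n) (Fin n) ℂ) :=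
    {p | IsUnit (algebraMap ℂ (Matrix (Fin n) (Fin n) ℂ) p.1 - p.2)} with hu
  have huo : IsOpen u := by
    have : Continuous fun p : ℂ × Matrix (Fin n) (Fin n) ℂ =>
        algebraMap ℂ (Matrix (Fin n) (Fin n) ℂ) p.1 - p.2 :=
      ((continuous_algebraMap ℂ _).comp continuous_fst).sub continuous_snd
    exact Units.isOpen.preimage this
  have hsub : K ×ˢ ({Ac} : Set (Matrix (Fin n) (Fin n) ℂ)) ⊆ u := by
    rintro ⟨z, M⟩ ⟨hzK, hM⟩
    simp only [Set.mem_singleton_iff] at hM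
    subst hM
    have hznot : z ∉ spectrum ℂ Ac := fun hz => absurd (hδs z hz) (not_lt.mpr hzK.2)
    exact spectrum.notMem_iff.mp hznot
  obtain ⟨v, w, hvo, hwo, hKv, hAw, hvwu⟩ :=
    generalized_tube_lemma hKc isCompact_singleton huo hsub
  -- eventual facts
  have h1 : ∀ᶠ ε in 𝓝[>] (0:ℝ), B ε ∈ w :=
    hslope.eventually_mem (hwo.mem_nhds (hAw rfl))
  have h2 : ∀ᶠ ε in 𝓝[>] (0:ℝ), ‖B ε‖ < ‖Ac‖ + 1 :=
    hslope.norm.eventually_lt_const (lt_add_one ‖Ac‖)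
  have h3 : ∀ᶠ ε in 𝓝[>] (0:ℝ), ε ∈ Set.Ioo 0 (δ / (R ^ 2 + 1)) :=
    Ioo_mem_nhdsGT_of_mem ⟨le_refl 0, by positivity⟩
  obtain ⟨ε, hεw, hεn, hεI⟩ := (h1.and (h2.and h3)).exists
  obtain ⟨hε0, hεδ⟩ := hεI
  refine ⟨ε, hε0, ?_⟩
  intro μ hμ
  rw [key ε] at hμ
  -- Mc ε = 1 + ε • B ε
  have hMcB : Mc ε = 1 + (ε : ℂ) • B ε := by
    rw [hB]
    have : slope Mc 0 ε = ε⁻¹ • (Mc ε - Mc 0) := by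
      simp [slope_def_module]
    rw [this, hMc0]
    rw [← algebraMap_smul ℂ (ε⁻¹ : ℝ), smul_smul]
    have hne : (ε : ℂ) * (algebraMap ℝ ℂ ε⁻¹) = 1 := by
      simp only [Complex.coe_algebraMap, ← Complex.ofReal_mul,
        mul_inv_cancel₀ (ne_of_gt hε0)]
      norm_num
    rw [hne, one_smul]
    abel
  have hεc : (ε : ℂ) ≠ 0 := by exact_mod_cast ne_of_gt hε0
  have hμ' : μ ∈ spectrum ℂ ((1 : Matrix (Fin n) (Fin n) ℂ) + (ε : ℂ) • B ε) := by
    rw [← hMcB]; exact hμ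
  have hσ : spectrum ℂ ((1 : Matrix (Fin n) (Fin n) ℂ) + (ε : ℂ) • B ε)
      = {(1 : ℂ)} + (Units.mk0 (ε : ℂ) hεc) • spectrum ℂ (B ε) := by
    have hone : (1 : Matrix (Fin n) (Fin n) ℂ) = algebraMap ℂ _ (1 : ℂ) := (_root_.map_one (algebraMap ℂ (Matrix (Fin n) (Fin n) ℂ))).symm
    rw [show ((ε : ℂ) • B ε) = (Units.mk0 (ε : ℂ) hεc) • B ε from rfl]
    nth_rewrite 1 [hone]
    rw [← spectrum.singleton_add_eq, spectrum.unit_smul_eq_smul]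
  rw [hσ] at hμ'
  obtain ⟨a, ha, b, hb, rfl⟩ := Set.mem_add.mp hμ'
  obtain ⟨ν, hν, rfl⟩ := hb
  simp only [Set.mem_singleton_iff] at ha
  subst ha
  -- ν is in the spectrum of B ε, hence outside v, hence re < -δ and bounded in norm
  have hνnorm : ‖ν‖ ≤ R := by
    have h5 := spectrum.norm_le_norm_mul_of_mem hν
    have h6 : ‖B ε‖ * ‖(1 : Matrix (Fin n) (Fin n) ℂ)‖
        ≤ (‖Ac‖ + 1) * ‖(1 : Matrix (Fin n) (Fin n) ℂ)‖ :=
      mul_le_mul_of_nonneg_right (le_of_lt hεn) (norm_nonneg _)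
    rw [hR]; linarith
  have hνK : ν ∉ K := by
    intro hνK
    have : (ν, B ε) ∈ u := hvwu ⟨hKv hνK, hεw⟩
    exact spectrum.notMem_iff.mpr this hν
  have hνre : ν.re < -δ := by
    by_contra hcon
    exact hνK ⟨Metric.mem_closedBall.mpr (by simpa using hνnorm), not_lt.mp hcon⟩
  -- numeric estimate
  have hμre : (1 + (Units.mk0 (ε : ℂ) hεc) • ν).re = 1 + ε * ν.re := by
    simp [Units.smul_def, Complex.add_re, Complex.mul_re]
  have hμim : (1 + (Units.mk0 (ε : ℂ) hεc) • ν).im = ε * ν.im := by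
    simp [Units.smul_def, Complex.add_im, Complex.mul_im]
  have hν2 : ν.re ^ 2 + ν.im ^ 2 ≤ R ^ 2 := by
    have h7 : ‖ν‖ ≤ R := hνnorm
    have h8 := Complex.sq_norm ν
    rw [Complex.normSq_apply] at h8
    nlinarith [norm_nonneg ν]
  have hεR : ε * (R ^ 2 + 1) < δ := by
    rw [lt_div_iff₀ (by positivity : (0:ℝ) < R ^ 2 + 1)] at hεδ
    linarith
  have habs2 : (‖1 + (Units.mk0 (ε : ℂ) hεc) • ν‖) ^ 2
      = (1 + ε * ν.re) ^ 2 + (ε * ν.im) ^ 2 := by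
    rw [Complex.sq_norm, Complex.normSq_apply, hμre, hμim]; ring
  have hlt : (‖1 + (Units.mk0 (ε : ℂ) hεc) • ν‖) ^ 2 < 1 := by
    rw [habs2]
    nlinarith [mul_pos hε0 hδ, sq_nonneg ε, mul_lt_mul_of_pos_left hνre hε0,
      mul_le_mul_of_nonneg_left hν2 (sq_nonneg ε),
      mul_lt_mul_of_pos_left hεR hε0]
  show ‖1 + (Units.mk0 (ε : ℂ) hεc) • ν‖ < 1
  nlinarith [norm_nonneg (1 + (Units.mk0 (ε : ℂ) hεc) • ν), hlt]

end Aux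

/-- Proposition 1, core: cycling through the generators `A j` for time fractions `α j`
over a short enough period `ε` yields a Schur-stable one-period transition matrix. -/
theorem cyclic_switching_schur_stable {n m : ℕ}
    (A : Fin m → Matrix (Fin n) (Fin n) ℝ) (α : Fin m → ℝ)
    (hα : ∀ j, 0 ≤ α j) (hsum : ∑ j, α j = 1)
    (hc : Hurwitz (∑ j, α j • A j)) :
    ∃ ε > (0 : ℝ), ∀ μ ∈ spectrum ℂ
      ((((List.ofFn fun j : Fin m =>
          NormedSpace.exp ((ε * α j) • A j)).reverse).prod).map (algebraMap ℝ ℂ)),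
      ‖μ‖ < 1 :=
  main_aux A α hc
end

section
/- Let A_1, …, A_m be real symmetric negative semidefinite n×n matrices whose kernels intersect trivially: if A_j x = 0 for all j then x = 0. Then for any positive real numbers τ_1, …, τ_m, the matrix M = exp(τ_m A_m) · … · exp(τ_1 A_1) has Euclidean operator norm strictly less than 1. -/
open Matrix
open scoped Matrix.Norms.L2Operator

lemma sum_sq_unitary {n : ℕ} {U : Matrix (Fin n) (Fin n) ℝ}
    (hU : U ∈ Matrix.unitaryGroup (Fin n) ℝ) (w : Fin n → ℝ) :
    ∑ i, (U *ᵥ w) i ^ 2 = ∑ i, w i ^ 2 := by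
  have h1 : ∀ v : Fin n → ℝ, ∑ i, v i ^ 2 = v ⬝ᵥ v := by
    intro v; simp [dotProduct, sq]
  have hsU : Uᵀ = star U := by
    ext i j; simp [Matrix.star_apply]
  rw [h1, h1, Matrix.dotProduct_mulVec, ← Matrix.vecMul_transpose,
    Matrix.vecMul_vecMul, hsU, Matrix.mem_unitaryGroup_iff'.mp hU, Matrix.vecMul_one]

lemma exp_contraction {n : ℕ} (B : Matrix (Fin n) (Fin n) ℝ) (hB : (-B).PosSemidef)
    (x : Fin n → ℝ) :
    (∑ i, (NormedSpace.exp B *ᵥ x) i ^ 2 ≤ ∑ i, x i ^ 2) ∧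
    (∑ i, (NormedSpace.exp B *ᵥ x) i ^ 2 = ∑ i, x i ^ 2 →
      B *ᵥ x = 0 ∧ NormedSpace.exp B *ᵥ x = x) := by
  have hH : B.IsHermitian := by simpa using hB.1.neg
  set U : Matrix (Fin n) (Fin n) ℝ := ↑(hH.eigenvectorUnitary) with hUdef
  have hUmem : U ∈ Matrix.unitaryGroup (Fin n) ℝ := (hH.eigenvectorUnitary).2
  set μ := hH.eigenvalues with hμdef
  -- eigenvalues are nonpositive
  have hμ : ∀ i, μ i ≤ 0 := by
    intro i
    have h2 := hB.dotProduct_mulVec_nonneg (hH.eigenvectorBasis i)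
    have h3 := hH.eigenvalues_eq i
    simp only [Matrix.neg_mulVec, dotProduct_neg] at h2
    rw [hμdef, h3]
    simpa using h2
  -- spectral decomposition
  have spec : B = U * Matrix.diagonal μ * star U := by
    have := hH.spectral_theorem
    simpa using this
  set u : (Matrix (Fin n) (Fin n) ℝ)ˣ := Unitary.toUnits hH.eigenvectorUnitary with hudef
  have hexp : NormedSpace.exp B = U * Matrix.diagonal (fun i => Real.exp (μ i)) * star U := by
    have hBu : B = (u : Matrix (Fin n) (Fin n) ℝ) * Matrix.diagonal μ *
        ((u⁻¹ : (Matrix (Fin n) (Fin n) ℝ)ˣ) : Matrix (Fin n) (Fin n) ℝ) := spec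
    rw [hBu, Matrix.exp_units_conj, Matrix.exp_diagonal]
    have h4 : NormedSpace.exp μ = fun i => Real.exp (μ i) := by
      rw [Pi.exp_def, ← Real.exp_eq_exp_ℝ]
    rw [h4]
    rfl
  have assoc : ∀ (P Q : Matrix (Fin n) (Fin n) ℝ) (v : Fin n → ℝ),
      (P * Q) *ᵥ v = P *ᵥ (Q *ᵥ v) := fun P Q v => (Matrix.mulVec_mulVec v P Q).symm
  set c : Fin n → ℝ := star U *ᵥ x with hcdef
  have hUc : U *ᵥ c = x := by
    rw [hcdef, Matrix.mulVec_mulVec, Matrix.mem_unitaryGroup_iff.mp hUmem, Matrix.one_mulVec]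
  have hdiag : ∀ (f : Fin n → ℝ),
      Matrix.diagonal f *ᵥ c = fun i => f i * c i := by
    intro f; ext i; exact Matrix.mulVec_diagonal f c i
  have hEx : NormedSpace.exp B *ᵥ x = U *ᵥ (fun i => Real.exp (μ i) * c i) := by
    calc NormedSpace.exp B *ᵥ x
        = (U * Matrix.diagonal (fun i => Real.exp (μ i))) *ᵥ (star U *ᵥ x) := by
          rw [hexp, assoc]
      _ = U *ᵥ (Matrix.diagonal (fun i => Real.exp (μ i)) *ᵥ c) := by
          rw [assoc, ← hcdef]
      _ = U *ᵥ (fun i => Real.exp (μ i) * c i) := by rw [hdiag]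
  have hBx : B *ᵥ x = U *ᵥ (fun i => μ i * c i) := by
    calc B *ᵥ x = (U * Matrix.diagonal μ) *ᵥ (star U *ᵥ x) := by
          conv_lhs => rw [spec]
          rw [assoc]
      _ = U *ᵥ (Matrix.diagonal μ *ᵥ c) := by rw [assoc, ← hcdef]
      _ = U *ᵥ (fun i => μ i * c i) := by rw [hdiag]
  have hSx : ∑ i, x i ^ 2 = ∑ i, c i ^ 2 := by
    rw [← hUc, sum_sq_unitary hUmem]
  have hSE : ∑ i, (NormedSpace.exp B *ᵥ x) i ^ 2 = ∑ i, (Real.exp (μ i) * c i) ^ 2 := by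
    rw [hEx, sum_sq_unitary hUmem]
  have hterm : ∀ i : Fin n, (Real.exp (μ i) * c i) ^ 2 ≤ c i ^ 2 := by
    intro i
    have h5 : Real.exp (μ i) ≤ 1 := Real.exp_le_one_iff.mpr (hμ i)
    have h6 : 0 < Real.exp (μ i) := Real.exp_pos _
    rw [mul_pow]
    have h7 : Real.exp (μ i) ^ 2 ≤ 1 := by nlinarith
    nlinarith [sq_nonneg (c i)]
  constructor
  · rw [hSE, hSx]
    exact Finset.sum_le_sum fun i _ => hterm i
  · intro heq
    rw [hSE, hSx] at heq
    have hall := (Finset.sum_eq_sum_iff_of_le fun i _ => hterm i).mp heq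
    have hkey : ∀ i, Real.exp (μ i) * c i = c i ∧ μ i * c i = 0 := by
      intro i
      have h7 := hall i (Finset.mem_univ i)
      rcases eq_or_ne (c i) 0 with hc | hc
      · simp [hc]
      · have h5 : Real.exp (μ i) ≤ 1 := Real.exp_le_one_iff.mpr (hμ i)
        have h6 : 0 < Real.exp (μ i) := Real.exp_pos _
        have hc2 : 0 < c i ^ 2 := by positivity
        have h8 : Real.exp (μ i) = 1 := by
          have h10 : (Real.exp (μ i) - 1) * (Real.exp (μ i) + 1) * c i ^ 2 = 0 := by
            nlinarith [h7]
          rcases mul_eq_zero.mp h10 with h11 | h11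
          · rcases mul_eq_zero.mp h11 with h12 | h12 <;> linarith
          · linarith
        have h9 : μ i = 0 := Real.exp_injective (h8.trans Real.exp_zero.symm)
        exact ⟨by rw [h8, one_mul], by rw [h9, zero_mul]⟩
    constructor
    · rw [hBx]
      have : (fun i => μ i * c i) = (0 : Fin n → ℝ) := by
        ext i; exact (hkey i).2
      rw [this, Matrix.mulVec_zero]
    · rw [hEx]
      have : (fun i => Real.exp (μ i) * c i) = c := by
        ext i; exact (hkey i).1
      rw [this, hUc]

lemma prod_contraction {n : ℕ} (l : List (Matrix (Fin n) (Fin n) ℝ))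
    (h1 : ∀ E ∈ l, ∀ y : Fin n → ℝ, ∑ i, (E *ᵥ y) i ^ 2 ≤ ∑ i, y i ^ 2)
    (h2 : ∀ E ∈ l, ∀ y : Fin n → ℝ,
      (∑ i, (E *ᵥ y) i ^ 2 = ∑ i, y i ^ 2) → E *ᵥ y = y) :
    ∀ x : Fin n → ℝ,
      (∑ i, (l.reverse.prod *ᵥ x) i ^ 2 ≤ ∑ i, x i ^ 2) ∧
      ((∑ i, (l.reverse.prod *ᵥ x) i ^ 2 = ∑ i, x i ^ 2) → ∀ E ∈ l, E *ᵥ x = x) := by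
  induction l with
  | nil => intro x; simp [Matrix.one_mulVec]
  | cons E t ih =>
    intro x
    have hEl : E ∈ E :: t := List.mem_cons_self
    have hprod : (E :: t).reverse.prod *ᵥ x = t.reverse.prod *ᵥ (E *ᵥ x) := by
      rw [List.reverse_cons, List.prod_append, List.prod_cons, List.prod_nil, mul_one,
        ← Matrix.mulVec_mulVec]
    have h1t : ∀ F ∈ t, ∀ y : Fin n → ℝ, ∑ i, (F *ᵥ y) i ^ 2 ≤ ∑ i, y i ^ 2 :=
      fun F hF => h1 F (List.mem_cons_of_mem E hF)
    have h2t : ∀ F ∈ t, ∀ y : Fin n → ℝ,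
        (∑ i, (F *ᵥ y) i ^ 2 = ∑ i, y i ^ 2) → F *ᵥ y = y :=
      fun F hF => h2 F (List.mem_cons_of_mem E hF)
    have iht := ih h1t h2t (E *ᵥ x)
    constructor
    · rw [hprod]
      exact iht.1.trans (h1 E hEl x)
    · intro heq
      rw [hprod] at heq
      have hEeq : ∑ i, (E *ᵥ x) i ^ 2 = ∑ i, x i ^ 2 :=
        le_antisymm (h1 E hEl x) (heq ▸ iht.1)
      have hEx : E *ᵥ x = x := h2 E hEl x hEeq
      intro F hF
      rcases List.mem_cons.mp hF with rfl | hF'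
      · exact hEx
      · have := iht.2 (by rw [hEeq, heq]) F hF'
        rwa [hEx] at this

/-- If `A 1, …, A m` are real symmetric negative semidefinite matrices whose kernels
intersect trivially, then for any positive dwell times `τ j` the product
`exp(τ m • A m) ⋯ exp(τ 1 • A 1)` has Euclidean operator norm strictly less than one. -/
theorem symmetric_generators_strict_contraction {n m : ℕ}
    (A : Fin m → Matrix (Fin n) (Fin n) ℝ)
    (hA : ∀ j, (-(A j)).PosSemidef)
    (hker : ∀ x : Fin n → ℝ, (∀ j, A j *ᵥ x = 0) → x = 0)
    (τ : Fin m → ℝ) (hτ : ∀ j, 0 < τ j) :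
    ‖(((List.ofFn fun j : Fin m =>
        NormedSpace.exp (τ j • A j)).reverse).prod)‖ < 1 := by
  rcases Nat.eq_zero_or_pos n with hn0 | hn
  · subst hn0
    have hM : ((List.ofFn fun j : Fin m =>
        NormedSpace.exp (τ j • A j)).reverse).prod = 0 := by
      ext i j; exact i.elim0
    rw [hM, norm_zero]; norm_num
  -- setup
  set L : List (Matrix (Fin n) (Fin n) ℝ) :=
    List.ofFn fun j : Fin m => NormedSpace.exp (τ j • A j) with hLdef
  set M : Matrix (Fin n) (Fin n) ℝ := L.reverse.prod with hMdef
  -- each generator scaled by dwell time is negative semidefinite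
  have hfac : ∀ j, (-(τ j • A j)).PosSemidef := by
    intro j
    have hsym : (A j)ᴴ = A j := by
      have h := (hA j).1
      rwa [Matrix.IsHermitian, Matrix.conjTranspose_neg, neg_inj] at h
    refine Matrix.PosSemidef.of_dotProduct_mulVec_nonneg ?_ ?_
    · show (-(τ j • A j))ᴴ = -(τ j • A j)
      rw [Matrix.conjTranspose_neg, Matrix.conjTranspose_smul, hsym]
      norm_num
    · intro x
      have h := (hA j).dotProduct_mulVec_nonneg x
      have hrw : -(τ j • A j) *ᵥ x = τ j • ((-(A j)) *ᵥ x) := by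
        rw [← Matrix.smul_mulVec, smul_neg, Matrix.neg_mulVec]
      rw [hrw, dotProduct_smul]
      exact smul_nonneg (hτ j).le h
  have hkey := fun j => exp_contraction (τ j • A j) (hfac j)
  -- hypotheses for the list lemma
  have h1 : ∀ E ∈ L, ∀ y : Fin n → ℝ, ∑ i, (E *ᵥ y) i ^ 2 ≤ ∑ i, y i ^ 2 := by
    intro E hE y
    obtain ⟨j, rfl⟩ := List.mem_ofFn.mp hE
    exact (hkey j y).1
  have h2 : ∀ E ∈ L, ∀ y : Fin n → ℝ,
      (∑ i, (E *ᵥ y) i ^ 2 = ∑ i, y i ^ 2) → E *ᵥ y = y := by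
    intro E hE y hy
    obtain ⟨j, rfl⟩ := List.mem_ofFn.mp hE
    exact ((hkey j y).2 hy).2
  have hQ : ∀ (j : Fin m) (y : Fin n → ℝ),
      NormedSpace.exp (τ j • A j) *ᵥ y = y → A j *ᵥ y = 0 := by
    intro j y hy
    have heq : ∑ i, (NormedSpace.exp (τ j • A j) *ᵥ y) i ^ 2 = ∑ i, y i ^ 2 := by
      rw [hy]
    have hB := ((hkey j y).2 heq).1
    rw [Matrix.smul_mulVec] at hB
    exact (smul_eq_zero_iff_right (hτ j).ne').mp hB
  -- strict decrease of the quadratic norm for nonzero vectors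
  have hstrict : ∀ x : Fin n → ℝ, x ≠ 0 → ∑ i, (M *ᵥ x) i ^ 2 < ∑ i, x i ^ 2 := by
    intro x hx
    have hp := prod_contraction L h1 h2 x
    rcases lt_or_eq_of_le hp.1 with h | h
    · exact h
    · exfalso
      apply hx
      apply hker
      intro j
      apply hQ j x
      apply hp.2 h
      exact List.mem_ofFn.mpr ⟨j, rfl⟩
  -- pass to the Euclidean operator norm
  haveI : Nonempty (Fin n) := ⟨⟨0, hn⟩⟩
  have hnorm : ∀ y : EuclideanSpace ℝ (Fin n), ‖y‖ = Real.sqrt (∑ i, (y i) ^ 2) := by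
    intro y
    rw [EuclideanSpace.norm_eq]
    congr 1
    refine Finset.sum_congr rfl fun i _ => ?_
    rw [Real.norm_eq_abs, sq_abs]
  set T := Matrix.toEuclideanCLM (𝕜 := ℝ) M with hTdef
  have hTapp : ∀ x : EuclideanSpace ℝ (Fin n), ∀ i,
      (T x) i = (M *ᵥ (WithLp.equiv 2 (Fin n → ℝ) x)) i := by
    intro x i
    have h := Matrix.ofLp_toEuclideanCLM (𝕜 := ℝ) M x
    exact congrFun h i
  obtain ⟨x₀, hx₀K, hx₀max⟩ := (isCompact_sphere (0 : EuclideanSpace ℝ (Fin n)) 1).exists_isMaxOn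
    (NormedSpace.sphere_nonempty.mpr zero_le_one) ((T.continuous.norm).continuousOn)
  have hx₀ : ‖x₀‖ = 1 := mem_sphere_zero_iff_norm.mp hx₀K
  have hMnorm : ‖M‖ ≤ ‖T x₀‖ := by
    rw [Matrix.cstar_norm_def]
    exact ContinuousLinearMap.opNorm_le_of_unit_norm (norm_nonneg _)
      (fun x hx => hx₀max (mem_sphere_zero_iff_norm.mpr hx))
  refine lt_of_le_of_lt hMnorm ?_
  -- compute ‖T x₀‖
  set x₀f : Fin n → ℝ := WithLp.equiv 2 (Fin n → ℝ) x₀ with hx₀fdef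
  have hx₀ne : x₀f ≠ 0 := by
    intro hzero
    have : x₀ = 0 := by
      apply (WithLp.equiv 2 (Fin n → ℝ)).injective
      exact hzero
    rw [this, norm_zero] at hx₀
    norm_num at hx₀
  have hsum1 : ∑ i, x₀f i ^ 2 = 1 := by
    have := hnorm x₀
    rw [hx₀] at this
    have h2 := Real.sqrt_eq_one.mp this.symm
    simpa [hx₀fdef] using h2
  have hlt := hstrict x₀f hx₀ne
  rw [hsum1] at hlt
  have hTx₀ : ‖T x₀‖ = Real.sqrt (∑ i, (M *ᵥ x₀f) i ^ 2) := by
    rw [hnorm (T x₀)]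
    have hss : ∑ i, (T x₀) i ^ 2 = ∑ i, (M *ᵥ x₀f) i ^ 2 :=
      Finset.sum_congr rfl fun i _ => by rw [hTapp x₀ i]
    rw [hss]
  rw [hTx₀, show (1 : ℝ) = Real.sqrt 1 from Real.sqrt_one.symm]
  exact Real.sqrt_lt_sqrt (Finset.sum_nonneg fun i _ => sq_nonneg _) hlt
end

section
/- Let A_1, …, A_m be real symmetric negative semidefinite n×n matrices whose kernels intersect trivially: if A_j x = 0 for all j then x = 0. Then for any positive real numbers τ_1, …, τ_m and any x ∈ ℝ^n, the sequence M^k x tends to 0 as k → ∞, where M = exp(τ_m A_m) · … · exp(τ_1 A_1). -/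
open Filter Matrix

namespace CyclicStabAux

variable {n : ℕ}

lemma my_sum_dotProduct {ι : Type*} (s : Finset ι) (f : ι → Fin n → ℝ) (w : Fin n → ℝ) :
    (∑ j ∈ s, f j) ⬝ᵥ w = ∑ j ∈ s, f j ⬝ᵥ w := by
  simp only [dotProduct, Finset.sum_apply, Finset.sum_mul]
  exact Finset.sum_comm

lemma my_dotProduct_sum {ι : Type*} (s : Finset ι) (w : Fin n → ℝ) (f : ι → Fin n → ℝ) :
    w ⬝ᵥ (∑ j ∈ s, f j) = ∑ j ∈ s, w ⬝ᵥ f j := by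
  simp only [dotProduct, Finset.sum_apply, Finset.mul_sum]
  exact Finset.sum_comm

lemma exp_mulVec_eigen (M : Matrix (Fin n) (Fin n) ℝ) (v : Fin n → ℝ) (μ : ℝ)
    (h : M *ᵥ v = μ • v) : NormedSpace.exp M *ᵥ v = Real.exp μ • v := by
  letI : SeminormedRing (Matrix (Fin n) (Fin n) ℝ) := Matrix.linftyOpSemiNormedRing
  letI : NormedRing (Matrix (Fin n) (Fin n) ℝ) := Matrix.linftyOpNormedRing
  letI : NormedAlgebra ℝ (Matrix (Fin n) (Fin n) ℝ) := Matrix.linftyOpNormedAlgebra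
  have hpow : ∀ k : ℕ, (M ^ k) *ᵥ v = (μ ^ k) • v := by
    intro k
    induction k with
    | zero => simp [Matrix.one_mulVec]
    | succ k ih =>
      rw [pow_succ, ← Matrix.mulVec_mulVec, h, Matrix.mulVec_smul, ih, smul_smul, ← pow_succ']
  let L : Matrix (Fin n) (Fin n) ℝ →ₗ[ℝ] (Fin n → ℝ) :=
    { toFun := fun N => N *ᵥ v
      map_add' := fun N₁ N₂ => Matrix.add_mulVec _ _ _
      map_smul' := fun c N => Matrix.smul_mulVec c N v }
  let L' := LinearMap.toContinuousLinearMap L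
  have hsum := NormedSpace.expSeries_summable' (𝕂 := ℝ) M
  have key : L' (NormedSpace.exp M) = Real.exp μ • v := by
    rw [NormedSpace.exp_eq_tsum (𝕂 := ℝ)]
    rw [L'.map_tsum hsum]
    have h2 : ∀ k : ℕ, L' ((k.factorial : ℝ)⁻¹ • M ^ k)
        = ((k.factorial : ℝ)⁻¹ • μ ^ k) • v := by
      intro k
      rw [_root_.map_smul]
      have : L' (M ^ k) = (μ ^ k) • v := hpow k
      rw [this, smul_smul, smul_eq_mul]
    simp_rw [h2]
    rw [Summable.tsum_smul_const (NormedSpace.expSeries_summable' (𝕂 := ℝ) μ)]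
    congr 1
    rw [Real.exp_eq_exp_ℝ, NormedSpace.exp_eq_tsum (𝕂 := ℝ)]
  exact key

lemma exp_fixed (M : Matrix (Fin n) (Fin n) ℝ) (τ : ℝ) (x : Fin n → ℝ)
    (h : M *ᵥ x = 0) : NormedSpace.exp (τ • M) *ᵥ x = x := by
  have h0 : (τ • M) *ᵥ x = (0 : ℝ) • x := by
    rw [Matrix.smul_mulVec, h, smul_zero, zero_smul]
  simpa using exp_mulVec_eigen (τ • M) x 0 h0

lemma exp_key {A : Matrix (Fin n) (Fin n) ℝ} (hA : (-A).PosSemidef) {τ : ℝ} (hτ : 0 < τ)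
    (x : Fin n → ℝ) :
    (NormedSpace.exp (τ • A) *ᵥ x) ⬝ᵥ (NormedSpace.exp (τ • A) *ᵥ x) ≤ x ⬝ᵥ x ∧
      ((NormedSpace.exp (τ • A) *ᵥ x) ⬝ᵥ (NormedSpace.exp (τ • A) *ᵥ x) = x ⬝ᵥ x →
        A *ᵥ x = 0) := by
  classical
  have hH : A.IsHermitian := by simpa using hA.1.neg
  set b := hH.eigenvectorBasis with hb
  set lam := hH.eigenvalues with hlam
  set v : Fin n → (Fin n → ℝ) := fun j => ⇑(b j) with hv
  have hAv : ∀ j, A *ᵥ v j = lam j • v j := fun j => hH.mulVec_eigenvectorBasis j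
  -- orthonormality in dot product form
  have hon : ∀ i j, v i ⬝ᵥ v j = if i = j then (1:ℝ) else 0 := by
    have horth := b.orthonormal
    rw [orthonormal_iff_ite] at horth
    intro i j
    have h := horth i j
    simpa [PiLp.inner_apply, RCLike.inner_apply, dotProduct, hv, mul_comm] using h
  -- eigenvalues are nonpositive
  have hlam_nonpos : ∀ j, lam j ≤ 0 := by
    intro j
    have h1 := hA.dotProduct_mulVec_nonneg (v j)
    rw [Matrix.neg_mulVec] at h1
    have h2 : (0:ℝ) ≤ -(v j ⬝ᵥ (A *ᵥ v j)) := by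
      simpa [dotProduct_neg] using h1
    have h3 : v j ⬝ᵥ (A *ᵥ v j) = lam j := by
      rw [hAv j, dotProduct_smul, hon j j]
      simp
    linarith [h2, h3.ge, h3.le]
  -- expansion in the eigenbasis
  have hexp : ∀ y : Fin n → ℝ, y = ∑ j, (v j ⬝ᵥ y) • v j := by
    intro y
    have h := b.sum_repr' ((WithLp.equiv 2 (Fin n → ℝ)).symm y)
    have h3 := congrArg (WithLp.linearEquiv 2 ℝ (Fin n → ℝ)) h
    rw [map_sum] at h3
    simp only [_root_.map_smul] at h3
    have h4 : ∀ i, (inner ℝ (b i) ((WithLp.equiv 2 (Fin n → ℝ)).symm y) : ℝ) = v i ⬝ᵥ y := by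
      intro i
      simp [PiLp.inner_apply, RCLike.inner_apply, dotProduct, WithLp.equiv_symm_apply, hv, mul_comm]
    have h5 : ∀ i, (WithLp.linearEquiv 2 ℝ (Fin n → ℝ)) (b i) = v i := fun i => rfl
    have h6 : (WithLp.linearEquiv 2 ℝ (Fin n → ℝ)) ((WithLp.equiv 2 (Fin n → ℝ)).symm y) = y := rfl
    rw [h6] at h3
    refine h3.symm.trans ?_
    refine Finset.sum_congr rfl fun i _ => ?_
    rw [h4, h5]
  -- quadratic form of an expansion
  have hQ : ∀ d : Fin n → ℝ, (∑ j, d j • v j) ⬝ᵥ (∑ j, d j • v j) = ∑ j, (d j)^2 := by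
    intro d
    rw [my_sum_dotProduct]
    refine Finset.sum_congr rfl fun j _ => ?_
    rw [my_dotProduct_sum]
    have : ∀ k, (d j • v j) ⬝ᵥ (d k • v k) = d j * d k * (if j = k then (1:ℝ) else 0) := by
      intro k
      rw [smul_dotProduct, dotProduct_smul, hon j k, smul_eq_mul, smul_eq_mul]
      ring
    simp_rw [this]
    simp [Finset.sum_ite_eq, sq]
  -- action of the exponential on the eigenbasis
  have hBv : ∀ j, NormedSpace.exp (τ • A) *ᵥ v j = Real.exp (τ * lam j) • v j := by
    intro j
    refine exp_mulVec_eigen _ _ _ ?_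
    rw [Matrix.smul_mulVec, hAv j, smul_smul]
  have hmulsum : ∀ (N : Matrix (Fin n) (Fin n) ℝ) (d : Fin n → ℝ),
      N *ᵥ (∑ j, d j • v j) = ∑ j, d j • (N *ᵥ v j) := by
    intro N d
    simp only [← Matrix.mulVecLin_apply, map_sum, _root_.map_smul]
  set c : Fin n → ℝ := fun j => v j ⬝ᵥ x with hc
  have hx : x = ∑ j, c j • v j := hexp x
  have hBx : NormedSpace.exp (τ • A) *ᵥ x
      = ∑ j, (Real.exp (τ * lam j) * c j) • v j := by
    conv_lhs => rw [hx]
    rw [hmulsum]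
    refine Finset.sum_congr rfl fun j _ => ?_
    rw [hBv j, smul_smul, mul_comm]
  have hAx : A *ᵥ x = ∑ j, (lam j * c j) • v j := by
    conv_lhs => rw [hx]
    rw [hmulsum]
    refine Finset.sum_congr rfl fun j _ => ?_
    rw [hAv j, smul_smul, mul_comm]
  have QBx : (NormedSpace.exp (τ • A) *ᵥ x) ⬝ᵥ (NormedSpace.exp (τ • A) *ᵥ x)
      = ∑ j, (Real.exp (τ * lam j) * c j)^2 := by
    rw [hBx, hQ]
  have Qx : x ⬝ᵥ x = ∑ j, (c j)^2 := by
    conv_lhs => rw [hx]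
    rw [hQ]
  have hterm : ∀ j, (Real.exp (τ * lam j) * c j)^2 ≤ (c j)^2 := by
    intro j
    have he1 : Real.exp (τ * lam j) ≤ 1 :=
      Real.exp_le_one_iff.mpr (mul_nonpos_of_nonneg_of_nonpos hτ.le (hlam_nonpos j))
    have he0 : 0 < Real.exp (τ * lam j) := Real.exp_pos _
    have hsq : Real.exp (τ * lam j) ^ 2 ≤ 1 := by nlinarith
    calc (Real.exp (τ * lam j) * c j)^2 = Real.exp (τ * lam j)^2 * (c j)^2 := by ring
      _ ≤ 1 * (c j)^2 := mul_le_mul_of_nonneg_right hsq (sq_nonneg _)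
      _ = (c j)^2 := one_mul _
  constructor
  · rw [QBx, Qx]
    exact Finset.sum_le_sum fun j _ => hterm j
  · intro heq
    rw [QBx, Qx] at heq
    have hall : ∀ j, (Real.exp (τ * lam j) * c j)^2 = (c j)^2 := by
      intro j
      by_contra hne
      have hlt : (Real.exp (τ * lam j) * c j)^2 < (c j)^2 := lt_of_le_of_ne (hterm j) hne
      have hslt : ∑ i, (Real.exp (τ * lam i) * c i)^2 < ∑ i, (c i)^2 :=
        Finset.sum_lt_sum (fun i _ => hterm i) ⟨j, Finset.mem_univ j, hlt⟩
      exact absurd heq (ne_of_lt hslt)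
    have hzero : ∀ j, lam j * c j = 0 := by
      intro j
      by_cases hcj : c j = 0
      · rw [hcj, mul_zero]
      · have h := hall j
        have he0 : 0 < Real.exp (τ * lam j) := Real.exp_pos _
        have h1 : Real.exp (τ * lam j) ^ 2 * (c j)^2 = 1 * (c j)^2 := by
          rw [one_mul, ← mul_pow]; exact h
        have h2 : Real.exp (τ * lam j) ^ 2 = 1 :=
          mul_right_cancel₀ (pow_ne_zero 2 hcj) h1
        have h3 : Real.exp (τ * lam j) = 1 := by nlinarith
        have h4 : τ * lam j = 0 := by
          have h5 := congrArg Real.log h3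
          rwa [Real.log_exp, Real.log_one] at h5
        have hlamj : lam j = 0 := by
          rcases mul_eq_zero.mp h4 with h' | h'
          · exact absurd h' (ne_of_gt hτ)
          · exact h'
        rw [hlamj, zero_mul]
    rw [hAx]
    refine Finset.sum_eq_zero fun j _ => ?_
    rw [hzero j, zero_smul]

lemma list_contraction (l : List (Matrix (Fin n) (Fin n) ℝ))
    (h1 : ∀ B ∈ l, ∀ y : Fin n → ℝ, (B *ᵥ y) ⬝ᵥ (B *ᵥ y) ≤ y ⬝ᵥ y)
    (h2 : ∀ B ∈ l, ∀ y : Fin n → ℝ, (B *ᵥ y) ⬝ᵥ (B *ᵥ y) = y ⬝ᵥ y → B *ᵥ y = y)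
    (x : Fin n → ℝ) :
    (l.reverse.prod *ᵥ x) ⬝ᵥ (l.reverse.prod *ᵥ x) ≤ x ⬝ᵥ x ∧
      ((l.reverse.prod *ᵥ x) ⬝ᵥ (l.reverse.prod *ᵥ x) = x ⬝ᵥ x → ∀ B ∈ l, B *ᵥ x = x) := by
  induction l generalizing x with
  | nil =>
    constructor
    · simp [Matrix.one_mulVec]
    · intro _ B hB; exact absurd hB List.not_mem_nil
  | cons B t ih =>
    have happ : (B :: t).reverse.prod *ᵥ x = t.reverse.prod *ᵥ (B *ᵥ x) := by
      rw [List.reverse_cons, List.prod_append, List.prod_cons, List.prod_nil, mul_one,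
        Matrix.mulVec_mulVec]
    have hBmem : B ∈ B :: t := List.mem_cons_self
    have h1' : ∀ C ∈ t, ∀ y : Fin n → ℝ, (C *ᵥ y) ⬝ᵥ (C *ᵥ y) ≤ y ⬝ᵥ y :=
      fun C hC => h1 C (List.mem_cons_of_mem _ hC)
    have h2' : ∀ C ∈ t, ∀ y : Fin n → ℝ, (C *ᵥ y) ⬝ᵥ (C *ᵥ y) = y ⬝ᵥ y → C *ᵥ y = y :=
      fun C hC => h2 C (List.mem_cons_of_mem _ hC)
    obtain ⟨ih1, ih2⟩ := ih h1' h2' (B *ᵥ x)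
    constructor
    · rw [happ]
      exact le_trans ih1 (h1 B hBmem x)
    · intro heq
      rw [happ] at heq
      have hBx : (B *ᵥ x) ⬝ᵥ (B *ᵥ x) = x ⬝ᵥ x :=
        le_antisymm (h1 B hBmem x) (heq ▸ ih1)
      have hfix : B *ᵥ x = x := h2 B hBmem x hBx
      intro C hC
      rcases List.mem_cons.mp hC with rfl | hC'
      · exact hfix
      · have h3 : (t.reverse.prod *ᵥ (B *ᵥ x)) ⬝ᵥ (t.reverse.prod *ᵥ (B *ᵥ x))
            = (B *ᵥ x) ⬝ᵥ (B *ᵥ x) := by rw [heq, hBx]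
        have h4 := ih2 h3 C hC'
        rwa [hfix] at h4

end CyclicStabAux

open CyclicStabAux in
/-- Periodically cycling through symmetric negative semidefinite generators with
trivially intersecting kernels, with arbitrary fixed positive dwell times, drives
every initial condition to the origin. -/
theorem symmetric_generators_cyclic_stabilization {n m : ℕ}
    (A : Fin m → Matrix (Fin n) (Fin n) ℝ)
    (hA : ∀ j, (-(A j)).PosSemidef)
    (hker : ∀ x : Fin n → ℝ, (∀ j, A j *ᵥ x = 0) → x = 0)
    (τ : Fin m → ℝ) (hτ : ∀ j, 0 < τ j) :
    ∀ x : Fin n → ℝ,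
      Tendsto (fun k : ℕ =>
          ((((List.ofFn fun j : Fin m =>
            NormedSpace.exp (τ j • A j)).reverse).prod) ^ k) *ᵥ x)
        atTop (nhds 0) := by
  intro x
  classical
  set l : List (Matrix (Fin n) (Fin n) ℝ) :=
    List.ofFn (fun j : Fin m => NormedSpace.exp (τ j • A j)) with hl
  set M := l.reverse.prod with hM
  have hmem : ∀ B ∈ l, ∃ j : Fin m, B = NormedSpace.exp (τ j • A j) := by
    intro B hB
    rw [hl, List.mem_ofFn] at hB
    obtain ⟨j, hj⟩ := hB
    exact ⟨j, hj.symm⟩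
  have h1 : ∀ B ∈ l, ∀ y : Fin n → ℝ, (B *ᵥ y) ⬝ᵥ (B *ᵥ y) ≤ y ⬝ᵥ y := by
    intro B hB y
    obtain ⟨j, rfl⟩ := hmem B hB
    exact (exp_key (hA j) (hτ j) y).1
  have h2 : ∀ B ∈ l, ∀ y : Fin n → ℝ, (B *ᵥ y) ⬝ᵥ (B *ᵥ y) = y ⬝ᵥ y → B *ᵥ y = y := by
    intro B hB y hy
    obtain ⟨j, rfl⟩ := hmem B hB
    exact exp_fixed _ _ _ ((exp_key (hA j) (hτ j) y).2 hy)
  have hlist := fun y => list_contraction l h1 h2 y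
  have hstrict : ∀ y : Fin n → ℝ, y ≠ 0 → (M *ᵥ y) ⬝ᵥ (M *ᵥ y) < y ⬝ᵥ y := by
    intro y hy
    rcases lt_or_eq_of_le (hlist y).1 with h | h
    · exact h
    · exfalso
      have hfix := (hlist y).2 h
      have hAy : ∀ j, A j *ᵥ y = 0 := by
        intro j
        have hBmem : NormedSpace.exp (τ j • A j) ∈ l := by
          rw [hl]; exact List.mem_ofFn.mpr ⟨j, rfl⟩
        have hfj := hfix _ hBmem
        exact (exp_key (hA j) (hτ j) y).2 (by rw [hfj])
      exact hy (hker y hAy)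
  rcases Nat.eq_zero_or_pos n with hn | hn
  · subst hn
    have hz : (fun k : ℕ => (M ^ k) *ᵥ x) = fun _ => (0 : Fin 0 → ℝ) :=
      funext fun k => funext fun i => i.elim0
    rw [hz]
    exact tendsto_const_nhds
  -- n positive: contraction argument via compactness of the sphere
  have hnorm : ∀ z : Fin n → ℝ,
      ‖(WithLp.equiv 2 (Fin n → ℝ)).symm z‖ = Real.sqrt (z ⬝ᵥ z) := by
    intro z
    rw [EuclideanSpace.norm_eq]
    congr 1
    refine Finset.sum_congr rfl fun i _ => ?_
    rw [WithLp.equiv_symm_apply, PiLp.toLp_apply, Real.norm_eq_abs, sq_abs, sq]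
  have hQnonneg : ∀ z : Fin n → ℝ, (0:ℝ) ≤ z ⬝ᵥ z :=
    fun z => Finset.sum_nonneg fun i _ => mul_self_nonneg _
  set T := Matrix.toEuclideanCLM (𝕜 := ℝ) M with hT
  have hTapply : ∀ z : Fin n → ℝ,
      T ((WithLp.equiv 2 (Fin n → ℝ)).symm z) = (WithLp.equiv 2 (Fin n → ℝ)).symm (M *ᵥ z) := by
    intro z
    rw [hT, WithLp.equiv_symm_apply, Matrix.toEuclideanCLM_toLp]
  have hT1 : ∀ y : EuclideanSpace ℝ (Fin n), ‖T y‖ ≤ ‖y‖ := by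
    intro y
    have hy : y = (WithLp.equiv 2 (Fin n → ℝ)).symm (WithLp.equiv 2 (Fin n → ℝ) y) :=
      (Equiv.symm_apply_apply _ _).symm
    rw [hy, hTapply, hnorm, hnorm]
    exact Real.sqrt_le_sqrt (hlist _).1
  have hTs : ∀ y : EuclideanSpace ℝ (Fin n), y ≠ 0 → ‖T y‖ < ‖y‖ := by
    intro y hy0
    have hy : y = (WithLp.equiv 2 (Fin n → ℝ)).symm (WithLp.equiv 2 (Fin n → ℝ) y) :=
      (Equiv.symm_apply_apply _ _).symm
    have hz : WithLp.equiv 2 (Fin n → ℝ) y ≠ 0 := by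
      intro h
      exact hy0 (by rw [hy, h]; rfl)
    rw [hy, hTapply, hnorm, hnorm]
    exact Real.sqrt_lt_sqrt (hQnonneg _) (hstrict _ hz)
  obtain ⟨i0⟩ : Nonempty (Fin n) := ⟨⟨0, hn⟩⟩
  have hx0 : (EuclideanSpace.single i0 (1:ℝ)) ∈ Metric.sphere (0 : EuclideanSpace ℝ (Fin n)) 1 := by
    rw [mem_sphere_zero_iff_norm, EuclideanSpace.norm_single]
    norm_num
  have hS : IsCompact (Metric.sphere (0 : EuclideanSpace ℝ (Fin n)) 1) := isCompact_sphere _ _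
  obtain ⟨y₀, hy₀S, hy₀max⟩ :=
    hS.exists_isMaxOn ⟨_, hx0⟩ (T.continuous.norm.continuousOn)
  set r := ‖T y₀‖ with hr
  have hy₀norm : ‖y₀‖ = 1 := mem_sphere_zero_iff_norm.mp hy₀S
  have hr1 : r < 1 := by
    have h := hTs y₀ (by
      intro h
      rw [h, norm_zero] at hy₀norm
      norm_num at hy₀norm)
    rw [hy₀norm] at h
    exact h
  have hr0 : (0:ℝ) ≤ r := norm_nonneg _
  have hbound : ∀ y : EuclideanSpace ℝ (Fin n), ‖T y‖ ≤ r * ‖y‖ := by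
    intro y
    by_cases hy : y = 0
    · simp [hy]
    · have hu : ‖(‖y‖⁻¹ • y : EuclideanSpace ℝ (Fin n))‖ = 1 := by
        rw [norm_smul, norm_inv, norm_norm, inv_mul_cancel₀ (norm_ne_zero_iff.mpr hy)]
      have hle := (isMaxOn_iff.mp hy₀max) _ (mem_sphere_zero_iff_norm.mpr hu)
      rw [_root_.map_smul, norm_smul, norm_inv, norm_norm] at hle
      have hypos : (0:ℝ) < ‖y‖ := norm_pos_iff.mpr hy
      calc ‖T y‖ = ‖y‖ * (‖y‖⁻¹ * ‖T y‖) := by field_simp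
        _ ≤ ‖y‖ * r := mul_le_mul_of_nonneg_left hle (norm_nonneg y)
        _ = r * ‖y‖ := mul_comm _ _
  have hiter : ∀ k : ℕ,
      ‖(WithLp.equiv 2 (Fin n → ℝ)).symm ((M ^ k) *ᵥ x)‖
        ≤ r ^ k * ‖(WithLp.equiv 2 (Fin n → ℝ)).symm x‖ := by
    intro k
    induction k with
    | zero => simp [Matrix.one_mulVec]
    | succ k ih =>
      have hstep : (M ^ (k+1)) *ᵥ x = M *ᵥ ((M ^ k) *ᵥ x) := by
        rw [Matrix.mulVec_mulVec, ← pow_succ']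
      rw [hstep, ← hTapply]
      calc ‖T ((WithLp.equiv 2 (Fin n → ℝ)).symm ((M ^ k) *ᵥ x))‖
          ≤ r * ‖(WithLp.equiv 2 (Fin n → ℝ)).symm ((M ^ k) *ᵥ x)‖ := hbound _
        _ ≤ r * (r ^ k * ‖(WithLp.equiv 2 (Fin n → ℝ)).symm x‖) :=
            mul_le_mul_of_nonneg_left ih hr0
        _ = r ^ (k+1) * ‖(WithLp.equiv 2 (Fin n → ℝ)).symm x‖ := by ring
  have htend0 : Tendsto
      (fun k : ℕ => ‖(WithLp.equiv 2 (Fin n → ℝ)).symm ((M ^ k) *ᵥ x)‖) atTop (nhds 0) := by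
    have hgeo : Tendsto
        (fun k : ℕ => r ^ k * ‖(WithLp.equiv 2 (Fin n → ℝ)).symm x‖) atTop (nhds 0) := by
      simpa using (tendsto_pow_atTop_nhds_zero_of_lt_one hr0 hr1).mul_const
        (‖(WithLp.equiv 2 (Fin n → ℝ)).symm x‖)
    exact squeeze_zero (fun k => norm_nonneg _) hiter hgeo
  have htendE : Tendsto
      (fun k : ℕ => (WithLp.equiv 2 (Fin n → ℝ)).symm ((M ^ k) *ᵥ x)) atTop
      (nhds (0 : EuclideanSpace ℝ (Fin n))) :=
    tendsto_zero_iff_norm_tendsto_zero.mpr htend0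
  have hfinal := ((PiLp.continuousLinearEquiv 2 ℝ (fun _ : Fin n => ℝ)).continuous.tendsto
    (0 : EuclideanSpace ℝ (Fin n))).comp htendE
  simp [Function.comp] at hfinal; exact hfinal
end

section
/- Let A and Q be real n×n matrices with Q symmetric, let r ∈ (0,1], θ ≥ 1, and let a < b be real numbers. Define x(t) = exp((t−a)A) x_a for t ∈ [a,b], set x_b = x(b), and let η = ‖Aᵀ(Q+I) + (Q+I)A‖ (operator norm induced by the Euclidean norm). Suppose x_aᵀ (Q+I) x_a ≤ 0, x_bᵀ (Q+I) x_b ≥ (1−r) · x_bᵀ x_b, x_b ≠ 0, and ‖x(t)‖ ≤ θ ‖x_b‖ for all t ∈ [a,b]. Then (b−a) · θ² · η ≥ 1 − r. -/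
open Matrix
open scoped Matrix.Norms.L2Operator

noncomputable def mulVecCLM {n : ℕ} (v : EuclideanSpace ℝ (Fin n)) :
    Matrix (Fin n) (Fin n) ℝ →L[ℝ] EuclideanSpace ℝ (Fin n) :=
  LinearMap.mkContinuous
    { toFun := fun M => (WithLp.equiv 2 (Fin n → ℝ)).symm (M *ᵥ (WithLp.equiv 2 (Fin n → ℝ)) v)
      map_add' := fun M N => by ext i; simp [Matrix.add_mulVec]
      map_smul' := fun c M => by ext i; simp [Matrix.smul_mulVec] }
    ‖v‖ (fun M => by simpa [mul_comm] using Matrix.l2_opNorm_mulVec M v)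

lemma mulVecCLM_apply {n : ℕ} (v : EuclideanSpace ℝ (Fin n)) (M : Matrix (Fin n) (Fin n) ℝ) :
    (WithLp.equiv 2 (Fin n → ℝ)) (mulVecCLM v M) = M *ᵥ (WithLp.equiv 2 (Fin n → ℝ)) v := rfl

lemma inner_eq_dot {n : ℕ} (u w : EuclideanSpace ℝ (Fin n)) :
    (inner ℝ u w : ℝ) = (WithLp.equiv 2 (Fin n → ℝ)) u ⬝ᵥ (WithLp.equiv 2 (Fin n → ℝ)) w := by
  simp [PiLp.inner_apply, dotProduct, RCLike.inner_apply, mul_comm]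

lemma hasDerivAt_expE {n : ℕ} (A : Matrix (Fin n) (Fin n) ℝ) (a t : ℝ) :
    HasDerivAt (fun t : ℝ => NormedSpace.exp ((t - a) • A))
      (A * NormedSpace.exp ((t - a) • A)) t := by
  haveI : CompleteSpace (Matrix (Fin n) (Fin n) ℝ) := FiniteDimensional.complete ℝ _
  have h : HasDerivAt (fun u : ℝ => NormedSpace.exp (u • A))
      (A * NormedSpace.exp ((t - a) • A)) (id t - a) :=
    hasDerivAt_exp_smul_const' (𝕂 := ℝ) A (t - a)
  have h2 := HasDerivAt.scomp t h ((hasDerivAt_id t).sub_const a)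
  rw [one_smul] at h2
  exact h2

/-- Dwell-time estimate (first case of Theorem 2): along a solution of `ẋ = Ax`
whose Euclidean norm stays within a factor `θ` of its final value, the interval
needed for `g(t) = x(t)ᵀ(Q+I)x(t)` to rise from `≤ 0` to `≥ (1-r)‖x_b‖²` has
length at least `(1-r)/(θ²η)`, where `η = ‖Aᵀ(Q+I) + (Q+I)A‖`. -/
theorem quadratic_form_dwell_time_bound {n : ℕ}
    (A Q : Matrix (Fin n) (Fin n) ℝ) (hQ : Qᵀ = Q)
    (r : ℝ) (hr : r ∈ Set.Ioc (0 : ℝ) 1) (θ : ℝ) (hθ : 1 ≤ θ)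
    (a b : ℝ) (hab : a < b) (xa : Fin n → ℝ)
    (x : ℝ → Fin n → ℝ)
    (hx : ∀ t ∈ Set.Icc a b, x t = NormedSpace.exp ((t - a) • A) *ᵥ xa)
    (hga : x a ⬝ᵥ ((Q + 1) *ᵥ x a) ≤ 0)
    (hgb : x b ⬝ᵥ ((Q + 1) *ᵥ x b) ≥ (1 - r) * (x b ⬝ᵥ x b))
    (hxb : x b ≠ 0)
    (hbound : ∀ t ∈ Set.Icc a b,
      ‖(WithLp.equiv 2 (Fin n → ℝ)).symm (x t)‖ ≤
        θ * ‖(WithLp.equiv 2 (Fin n → ℝ)).symm (x b)‖) :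
    (b - a) * θ ^ 2 * ‖Aᵀ * (Q + 1) + (Q + 1) * A‖ ≥ 1 - r := by
  set C : Matrix (Fin n) (Fin n) ℝ := Q + 1 with hC
  set M : Matrix (Fin n) (Fin n) ℝ := Aᵀ * C + C * A with hM
  set xaE : EuclideanSpace ℝ (Fin n) := (WithLp.equiv 2 (Fin n → ℝ)).symm xa with hxaE
  set y : ℝ → EuclideanSpace ℝ (Fin n) :=
    fun t => mulVecCLM xaE (NormedSpace.exp ((t - a) • A)) with hy
  have hyvec : ∀ t, (WithLp.equiv 2 (Fin n → ℝ)) (y t)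
      = NormedSpace.exp ((t - a) • A) *ᵥ xa := fun t => rfl
  have hyx : ∀ t ∈ Set.Icc a b, (WithLp.equiv 2 (Fin n → ℝ)) (y t) = x t := by
    intro t ht; rw [hx t ht]; rfl
  set g : ℝ → ℝ :=
    fun t => inner ℝ (y t) (Matrix.toEuclideanCLM (𝕜 := ℝ) C (y t)) with hg
  have hCyvec : ∀ v : EuclideanSpace ℝ (Fin n),
      (WithLp.equiv 2 (Fin n → ℝ)) (Matrix.toEuclideanCLM (𝕜 := ℝ) C v)
        = C *ᵥ (WithLp.equiv 2 (Fin n → ℝ)) v := by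
    intro v
    exact Matrix.ofLp_toEuclideanCLM C v
  have hg_eq : ∀ t ∈ Set.Icc a b, g t = x t ⬝ᵥ (C *ᵥ x t) := by
    intro t ht
    have hgt : g t = inner ℝ (y t) (Matrix.toEuclideanCLM (𝕜 := ℝ) C (y t)) := rfl
    rw [hgt, inner_eq_dot, hCyvec, hyx t ht]
  -- derivative of y
  set y' : ℝ → EuclideanSpace ℝ (Fin n) :=
    fun t => mulVecCLM xaE (A * NormedSpace.exp ((t - a) • A)) with hy'
  have hyd : ∀ t, HasDerivAt y (y' t) t := by
    intro t
    exact (mulVecCLM xaE).hasFDerivAt.comp_hasDerivAt t (hasDerivAt_expE A a t)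
  have hy'vec : ∀ t ∈ Set.Icc a b,
      (WithLp.equiv 2 (Fin n → ℝ)) (y' t) = A *ᵥ x t := by
    intro t ht
    rw [hy', mulVecCLM_apply, ← Matrix.mulVec_mulVec, hx t ht]
    rfl
  set D : ℝ → ℝ := fun t =>
    inner ℝ (y t) (Matrix.toEuclideanCLM (𝕜 := ℝ) C (y' t)) +
      inner ℝ (y' t) (Matrix.toEuclideanCLM (𝕜 := ℝ) C (y t)) with hD
  have hgd : ∀ t, HasDerivAt g (D t) t := by
    intro t
    have h1 := hyd t
    have h2 : HasDerivAt (fun t => Matrix.toEuclideanCLM (𝕜 := ℝ) C (y t))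
        (Matrix.toEuclideanCLM (𝕜 := ℝ) C (y' t)) t :=
      (Matrix.toEuclideanCLM (𝕜 := ℝ) C).hasFDerivAt.comp_hasDerivAt t h1
    exact (h1.inner ℝ h2)
  -- D equals the quadratic form in M on [a,b]
  have hD_eq : ∀ t ∈ Set.Icc a b, D t = x t ⬝ᵥ (M *ᵥ x t) := by
    intro t ht
    have hDt : D t = inner ℝ (y t) (Matrix.toEuclideanCLM (𝕜 := ℝ) C (y' t)) +
        inner ℝ (y' t) (Matrix.toEuclideanCLM (𝕜 := ℝ) C (y t)) := rfl
    rw [hDt, inner_eq_dot, inner_eq_dot, hCyvec, hCyvec, hyx t ht, hy'vec t ht]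
    have h1 : x t ⬝ᵥ ((Aᵀ * C) *ᵥ x t) = (A *ᵥ x t) ⬝ᵥ (C *ᵥ x t) := by
      rw [← Matrix.mulVec_mulVec, Matrix.dotProduct_mulVec, Matrix.vecMul_transpose]
    have h2 : x t ⬝ᵥ ((C * A) *ᵥ x t) = x t ⬝ᵥ (C *ᵥ (A *ᵥ x t)) := by
      rw [Matrix.mulVec_mulVec]
    have h3 : x t ⬝ᵥ (M *ᵥ x t) = x t ⬝ᵥ ((Aᵀ * C) *ᵥ x t) + x t ⬝ᵥ ((C * A) *ᵥ x t) := by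
      rw [hM, Matrix.add_mulVec, dotProduct_add]
    rw [h3, h1, h2]
    ring
  -- norm facts
  set xbE : EuclideanSpace ℝ (Fin n) := (WithLp.equiv 2 (Fin n → ℝ)).symm (x b) with hxbE
  have hxbE_ne : xbE ≠ 0 := by
    simpa [hxbE] using hxb
  have hxbE_pos : 0 < ‖xbE‖ := norm_pos_iff.mpr hxbE_ne
  have hMnonneg : (0:ℝ) ≤ ‖M‖ := norm_nonneg _
  have hbnd : ∀ t ∈ Set.Icc a b, D t ≤ ‖M‖ * (θ * ‖xbE‖) ^ 2 := by
    intro t ht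
    rw [hD_eq t ht]
    set xtE : EuclideanSpace ℝ (Fin n) := (WithLp.equiv 2 (Fin n → ℝ)).symm (x t) with hxtE
    have h1 : x t ⬝ᵥ (M *ᵥ x t)
        = inner ℝ xtE ((WithLp.equiv 2 (Fin n → ℝ)).symm (M *ᵥ x t) : EuclideanSpace ℝ (Fin n)) := by
      rw [inner_eq_dot]; rfl
    rw [h1]
    have h2 := real_inner_le_norm xtE ((WithLp.equiv 2 (Fin n → ℝ)).symm (M *ᵥ x t))
    have h3 : ‖((WithLp.equiv 2 (Fin n → ℝ)).symm (M *ᵥ x t) : EuclideanSpace ℝ (Fin n))‖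
        ≤ ‖M‖ * ‖xtE‖ := Matrix.l2_opNorm_mulVec M xtE
    have h4 : ‖xtE‖ ≤ θ * ‖xbE‖ := hbound t ht
    have h5 : (0:ℝ) ≤ θ * ‖xbE‖ := by positivity
    have h6 : ‖xtE‖ * ‖((WithLp.equiv 2 (Fin n → ℝ)).symm (M *ᵥ x t) : EuclideanSpace ℝ (Fin n))‖
        ≤ ‖M‖ * ‖xtE‖ ^ 2 :=
      le_trans (mul_le_mul_of_nonneg_left h3 (norm_nonneg xtE)) (le_of_eq (by ring))
    have h7 : ‖xtE‖ ^ 2 ≤ (θ * ‖xbE‖) ^ 2 :=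
      pow_le_pow_left₀ (norm_nonneg xtE) h4 2
    have h8 := mul_le_mul_of_nonneg_left h7 hMnonneg
    linarith
  -- mean value theorem
  have hcont : ContinuousOn g (Set.Icc a b) :=
    fun t _ => ((hgd t).continuousAt).continuousWithinAt
  obtain ⟨c, hc, hceq⟩ := exists_hasDerivAt_eq_slope g D hab hcont
    (fun t _ => hgd t)
  have hcIcc : c ∈ Set.Icc a b := Set.mem_Icc_of_Ioo hc
  have hslope : (g b - g a) / (b - a) ≤ ‖M‖ * (θ * ‖xbE‖) ^ 2 := by
    rw [← hceq]; exact hbnd c hcIcc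
  have hgb2 : g b ≥ (1 - r) * ‖xbE‖ ^ 2 := by
    rw [hg_eq b (Set.right_mem_Icc.mpr hab.le)]
    have : x b ⬝ᵥ x b = ‖xbE‖ ^ 2 := by
      rw [← real_inner_self_eq_norm_sq, inner_eq_dot]; rfl
    rw [← this]; exact hgb
  have hga2 : g a ≤ 0 := by
    rw [hg_eq a (Set.left_mem_Icc.mpr hab.le)]; exact hga
  have hba : (0:ℝ) < b - a := by linarith
  have key : (1 - r) * ‖xbE‖ ^ 2 ≤ (b - a) * (‖M‖ * (θ * ‖xbE‖) ^ 2) := by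
    have h := (div_le_iff₀ hba).mp hslope
    have : (‖M‖ * (θ * ‖xbE‖) ^ 2) * (b - a) = (b - a) * (‖M‖ * (θ * ‖xbE‖) ^ 2) := by ring
    linarith
  have hnb2 : (0:ℝ) < ‖xbE‖ ^ 2 := by positivity
  have h9 : (1 - r) * ‖xbE‖ ^ 2 ≤ ((b - a) * θ ^ 2 * ‖M‖) * ‖xbE‖ ^ 2 :=
    key.trans (le_of_eq (by ring))
  exact (mul_le_mul_iff_of_pos_right hnb2).mp h9
end

section
/- Let (E_t)_{t ≥ 0} be a family of linear maps on the n×n complex matrices, each positive (mapping positive semidefinite matrices to positive semidefinite matrices) and trace-preserving. Let ρ̂_0, ρ̄ and ρ_0 be density matrices (Hermitian, positive semidefinite, trace one) such that E_t(ρ̂_0) → ρ̄ as t → ∞ and the range of ρ_0 is contained in the range of ρ̂_0. Let Π̄ be the orthogonal projection matrix onto the range of ρ̄ (Π̄ = Π̄† = Π̄²). Then Tr(Π̄ · E_t(ρ_0)) → 1 as t → ∞. -/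
open Filter Matrix
open scoped ComplexOrder

namespace RobustAux
variable {n : ℕ}

lemma eq_of_forall_mulVec {M N : Matrix (Fin n) (Fin n) ℂ}
    (h : ∀ x, M *ᵥ x = N *ᵥ x) : M = N := by
  ext i j
  have := congrFun (h (Pi.single j 1)) i
  simpa [mulVec_single] using this

lemma trace_nonneg_of_posSemidef {A : Matrix (Fin n) (Fin n) ℂ} (hA : A.PosSemidef) :
    0 ≤ A.trace := by
  rw [Matrix.trace]
  refine Finset.sum_nonneg fun i _ => ?_
  have := hA.dotProduct_mulVec_nonneg (Pi.single i 1)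
  simpa [mulVec_single, dotProduct, Pi.single_apply] using this

lemma dot_self_eq (w : Fin n → ℂ) :
    star w ⬝ᵥ w = ((∑ i, Complex.normSq (w i) : ℝ) : ℂ) := by
  simp [dotProduct, Complex.normSq_eq_conj_mul_self]

lemma quad_diag (f : Fin n → ℝ) (y : Fin n → ℂ) :
    star y ⬝ᵥ (diagonal (fun i => (f i : ℂ))) *ᵥ y
      = ((∑ i, f i * Complex.normSq (y i) : ℝ) : ℂ) := by
  push_cast
  simp only [dotProduct, mulVec_diagonal, Pi.star_apply, Complex.normSq_eq_conj_mul_self,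
    Complex.star_def]
  exact Finset.sum_congr rfl fun i _ => by ring

lemma quad_conj (M N : Matrix (Fin n) (Fin n) ℂ) (x : Fin n → ℂ) :
    star x ⬝ᵥ (Nᴴ * M * N) *ᵥ x = star (N *ᵥ x) ⬝ᵥ M *ᵥ (N *ᵥ x) := by
  rw [star_mulVec, ← mulVec_mulVec, ← mulVec_mulVec, dotProduct_mulVec]


lemma quad_conj' (M N : Matrix (Fin n) (Fin n) ℂ) (x : Fin n → ℂ) :
    star x ⬝ᵥ (N * M * star N) *ᵥ x = star (star N *ᵥ x) ⬝ᵥ M *ᵥ (star N *ᵥ x) := by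
  have h := quad_conj M (star N) x
  rwa [← star_eq_conjTranspose, star_star] at h

lemma sandwich_mul {U D1 D2 : Matrix (Fin n) (Fin n) ℂ} (hU : star U * U = 1) :
    (U * D1 * star U) * (U * D2 * star U) = U * (D1 * D2) * star U := by
  calc (U * D1 * star U) * (U * D2 * star U)
      = U * (D1 * ((star U * U) * (D2 * star U))) := by simp only [Matrix.mul_assoc]
    _ = U * (D1 * D2) * star U := by rw [hU, Matrix.one_mul]; simp only [Matrix.mul_assoc]

lemma exists_smul_sub_posSemidef {A B : Matrix (Fin n) (Fin n) ℂ}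
    (hA : A.PosSemidef) (hB : B.PosSemidef)
    (hker : ∀ x, B *ᵥ x = 0 → A *ᵥ x = 0) :
    ∃ c : ℝ, 0 < c ∧ ((c : ℂ) • B - A).PosSemidef := by
  classical
  set μ : Fin n → ℝ := hB.1.eigenvalues with hμdef
  set V : Matrix (Fin n) (Fin n) ℂ := (hB.1.eigenvectorUnitary : Matrix (Fin n) (Fin n) ℂ)
    with hVdef
  have hVV : V * star V = 1 := mem_unitaryGroup_iff.mp hB.1.eigenvectorUnitary.2
  have hVV' : star V * V = 1 := mem_unitaryGroup_iff'.mp hB.1.eigenvectorUnitary.2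
  have hBspec : B = V * diagonal (fun i => (μ i : ℂ)) * star V := by
    simpa [Function.comp_def] using hB.1.spectral_theorem
  set ν : Fin n → ℝ := hA.1.eigenvalues with hνdef
  set W : Matrix (Fin n) (Fin n) ℂ := (hA.1.eigenvectorUnitary : Matrix (Fin n) (Fin n) ℂ)
    with hWdef
  have hWW : W * star W = 1 := mem_unitaryGroup_iff.mp hA.1.eigenvectorUnitary.2
  have hAspec : A = W * diagonal (fun i => (ν i : ℂ)) * star W := by
    simpa [Function.comp_def] using hA.1.spectral_theorem
  have hν0 : ∀ i, 0 ≤ ν i := fun i => hA.eigenvalues_nonneg i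
  have hμ0 : ∀ i, 0 ≤ μ i := fun i => hB.eigenvalues_nonneg i
  set K : ℝ := ∑ i, ν i with hKdef
  have hνK : ∀ i, ν i ≤ K := fun i =>
    Finset.single_le_sum (fun j _ => hν0 j) (Finset.mem_univ i)
  have hK0 : 0 ≤ K := Finset.sum_nonneg fun j _ => hν0 j
  by_cases hS : ((Finset.univ.filter fun i => μ i ≠ 0).image μ).Nonempty
  · -- main case : B has a positive eigenvalue
    set m : ℝ := ((Finset.univ.filter fun i => μ i ≠ 0).image μ).min' hS with hmdef
    have hm : 0 < m := by
      obtain ⟨i, hi, hiμ⟩ := Finset.mem_image.mp (Finset.min'_mem _ hS)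
      rcases (Finset.mem_filter.mp hi).2.lt_or_gt with h | h
      · exact absurd h (not_lt.mpr (hμ0 i))
      · rw [hmdef, ← hiμ]; exact h
    have hmle : ∀ i, μ i ≠ 0 → m ≤ μ i := fun i hi =>
      Finset.min'_le _ _ (Finset.mem_image.mpr
        ⟨i, Finset.mem_filter.mpr ⟨Finset.mem_univ i, hi⟩, rfl⟩)
    refine ⟨(K + 1) / m, by positivity, Matrix.PosSemidef.of_dotProduct_mulVec_nonneg ?_ ?_⟩
    · show _ = _
      simp only [conjTranspose_sub, conjTranspose_smul, hB.1.eq, hA.1.eq, Complex.star_def,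
        Complex.conj_ofReal]
    · intro x
      set c : ℝ := (K + 1) / m with hcdef
      set y : Fin n → ℂ := star V *ᵥ x with hydef
      set d : Fin n → ℝ := fun i => if μ i = 0 then 0 else 1 with hddef
      set P : Matrix (Fin n) (Fin n) ℂ := V * diagonal (fun i => (d i : ℂ)) * star V with hPdef
      set u : Fin n → ℂ := P *ᵥ x with hudef
      set z : Fin n → ℂ := star W *ᵥ u with hzdef
      have keyμd : diagonal (fun i => (μ i : ℂ)) * diagonal (fun i => (d i : ℂ))
          = diagonal (fun i => (μ i : ℂ)) := by
        rw [diagonal_mul_diagonal]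
        refine congrArg diagonal (funext fun i => ?_)
        by_cases h : μ i = 0 <;> simp [hddef, h]
      have keydd : diagonal (fun i => (d i : ℂ)) * diagonal (fun i => (d i : ℂ))
          = diagonal (fun i => (d i : ℂ)) := by
        rw [diagonal_mul_diagonal]
        refine congrArg diagonal (funext fun i => ?_)
        by_cases h : μ i = 0 <;> simp [hddef, h]
      have hBP : B * P = B := by
        rw [hBspec, hPdef, sandwich_mul hVV', keyμd]
      have hPP : P * P = P := by
        rw [hPdef, sandwich_mul hVV', keydd]
      have hPH : Pᴴ = P := by
        rw [hPdef]
        simp only [conjTranspose_mul, diagonal_conjTranspose, star_eq_conjTranspose,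
          conjTranspose_conjTranspose, Matrix.mul_assoc]
        congr 1
        funext i
        simp [Pi.star_def, Complex.star_def, Complex.conj_ofReal]
      have hqB : star x ⬝ᵥ B *ᵥ x = ((∑ i, μ i * Complex.normSq (y i) : ℝ) : ℂ) := by
        conv_lhs => rw [hBspec]
        rw [quad_conj', ← hydef, quad_diag]
      have hqP : star x ⬝ᵥ P *ᵥ x = ((∑ i, d i * Complex.normSq (y i) : ℝ) : ℂ) := by
        conv_lhs => rw [hPdef]
        rw [quad_conj', ← hydef, quad_diag]
      have hu_eq : star u ⬝ᵥ u = star x ⬝ᵥ P *ᵥ x := by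
        have h1 := quad_conj 1 P x
        rw [hPH, Matrix.mul_one, hPP] at h1
        simp only [one_mulVec] at h1
        rw [← hudef] at h1
        exact h1.symm
      have hz_eq : star z ⬝ᵥ z = star u ⬝ᵥ u := by
        have h1 := quad_conj' 1 W u
        rw [Matrix.mul_one, hWW] at h1
        simp only [one_mulVec] at h1
        rw [← hzdef] at h1
        exact h1.symm
      have hAu : A *ᵥ u = A *ᵥ x := by
        have hBux : B *ᵥ (u - x) = 0 := by
          rw [mulVec_sub, hudef, mulVec_mulVec, hBP, sub_self]
        have h := hker _ hBux
        rwa [mulVec_sub, sub_eq_zero] at h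
      have e1 : star (A *ᵥ u) = star u ᵥ* A := by rw [star_mulVec, hA.1.eq]
      have e2 : star (A *ᵥ x) = star x ᵥ* A := by rw [star_mulVec, hA.1.eq]
      have hqA : star x ⬝ᵥ A *ᵥ x = star u ⬝ᵥ A *ᵥ u :=
        calc star x ⬝ᵥ A *ᵥ x = (star x ᵥ* A) ⬝ᵥ x := by rw [dotProduct_mulVec]
          _ = star (A *ᵥ x) ⬝ᵥ x := by rw [e2]
          _ = star (A *ᵥ u) ⬝ᵥ x := by rw [hAu]
          _ = (star u ᵥ* A) ⬝ᵥ x := by rw [e1]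
          _ = star u ⬝ᵥ A *ᵥ x := by rw [dotProduct_mulVec]
          _ = star u ⬝ᵥ A *ᵥ u := by rw [hAu]
      have hqAu : star u ⬝ᵥ A *ᵥ u = ((∑ i, ν i * Complex.normSq (z i) : ℝ) : ℂ) := by
        conv_lhs => rw [hAspec]
        rw [quad_conj', ← hzdef, quad_diag]
      set SB : ℝ := ∑ i, μ i * Complex.normSq (y i) with hSBdef
      set Sd : ℝ := ∑ i, d i * Complex.normSq (y i) with hSddef
      set SA : ℝ := ∑ i, ν i * Complex.normSq (z i) with hSAdef
      have hSB0 : 0 ≤ SB :=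
        Finset.sum_nonneg fun i _ => mul_nonneg (hμ0 i) (Complex.normSq_nonneg _)
      have hSd0 : 0 ≤ Sd := by
        refine Finset.sum_nonneg fun i _ => mul_nonneg ?_ (Complex.normSq_nonneg _)
        by_cases h : μ i = 0 <;> simp [hddef, h]
      have hSAK : SA ≤ K * (∑ i, Complex.normSq (z i)) := by
        rw [Finset.mul_sum]
        exact Finset.sum_le_sum fun i _ =>
          mul_le_mul_of_nonneg_right (hνK i) (Complex.normSq_nonneg _)
      have hzu : (∑ i, Complex.normSq (z i)) = Sd := by
        have h2 : star z ⬝ᵥ z = (Sd : ℂ) := by rw [hz_eq, hu_eq, hqP]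
        rw [dot_self_eq] at h2
        exact_mod_cast h2
      have hmSd : m * Sd ≤ SB := by
        rw [Finset.mul_sum]
        refine Finset.sum_le_sum fun i _ => ?_
        by_cases h : μ i = 0
        · simp [hddef, h]
        · rw [hddef]
          simp only [h, if_false]
          rw [one_mul]
          exact mul_le_mul_of_nonneg_right (hmle i h) (Complex.normSq_nonneg _)
      have hSdle : Sd ≤ SB / m := (le_div_iff₀ hm).mpr (by linarith)
      have hfin : SA ≤ c * SB := by
        have h1 : SA ≤ K * Sd := hzu ▸ hSAK
        have h2 : K * Sd ≤ K * (SB / m) := mul_le_mul_of_nonneg_left hSdle hK0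
        have h3 : K * (SB / m) ≤ (K + 1) * (SB / m) :=
          mul_le_mul_of_nonneg_right (by linarith) (by positivity)
        have h4 : (K + 1) * (SB / m) = c * SB := by rw [hcdef]; ring
        linarith
      rw [sub_mulVec, smul_mulVec, dotProduct_sub, dotProduct_smul, hqB, hqA, hqAu,
        smul_eq_mul, ← Complex.ofReal_mul, ← Complex.ofReal_sub]
      rw [Complex.zero_le_real]
      linarith
  · -- degenerate case : B = 0
    have hμz : ∀ i, μ i = 0 := by
      intro i
      by_contra h
      exact hS ⟨μ i, Finset.mem_image.mpr
        ⟨i, Finset.mem_filter.mpr ⟨Finset.mem_univ i, h⟩, rfl⟩⟩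
    have hB0 : B = 0 := by
      rw [hBspec]
      simp [hμz]
    have hA0 : A = 0 := by
      refine eq_of_forall_mulVec fun x => ?_
      rw [zero_mulVec]
      exact hker x (by rw [hB0, zero_mulVec])
    refine ⟨1, one_pos, ?_⟩
    rw [hA0, hB0]
    simpa using Matrix.PosSemidef.zero

end RobustAux

/-- Robustness proposition: if a family of trace-preserving positive linear maps
drives an estimated initial state `ρ̂₀` to a target `ρ̄`, then any actual initial
state supported inside the support of `ρ̂₀` asymptotically acquires all its
population on the support of `ρ̄` (here `Pr` is the orthogonal projection onto the range of `ρ̄`). -/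
theorem robustness_of_support_population {n : ℕ}
    (E : ℝ → (Matrix (Fin n) (Fin n) ℂ →ₗ[ℂ] Matrix (Fin n) (Fin n) ℂ))
    (hpos : ∀ t : ℝ, 0 ≤ t → ∀ X : Matrix (Fin n) (Fin n) ℂ,
      X.PosSemidef → (E t X).PosSemidef)
    (htp : ∀ t : ℝ, 0 ≤ t → ∀ X : Matrix (Fin n) (Fin n) ℂ,
      (E t X).trace = X.trace)
    (ρhat ρbar ρ : Matrix (Fin n) (Fin n) ℂ)
    (hρhat : ρhat.PosSemidef ∧ ρhat.trace = 1)
    (hρbar : ρbar.PosSemidef ∧ ρbar.trace = 1)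
    (hρ : ρ.PosSemidef ∧ ρ.trace = 1)
    (hlim : Tendsto (fun t => E t ρhat) atTop (nhds ρbar))
    (hsupp : LinearMap.range (Matrix.toLin' ρ) ≤ LinearMap.range (Matrix.toLin' ρhat))
    (Pr : Matrix (Fin n) (Fin n) ℂ)
    (hPr : Prᴴ = Pr ∧ Pr * Pr = Pr ∧
      LinearMap.range (Matrix.toLin' Pr) = LinearMap.range (Matrix.toLin' ρbar)) :
    Tendsto (fun t => (Pr * E t ρ).trace) atTop (nhds 1) := by

  classical
  obtain ⟨hρhat1, hρhat2⟩ := hρhat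
  obtain ⟨hρbar1, hρbar2⟩ := hρbar
  obtain ⟨hρ1, hρ2⟩ := hρ
  obtain ⟨hPrH, hPrP, hPrR⟩ := hPr
  have hker : ∀ x, ρhat *ᵥ x = 0 → ρ *ᵥ x = 0 := by
    intro x hx
    have hmem : ρ *ᵥ x ∈ LinearMap.range (Matrix.toLin' ρhat) :=
      hsupp ⟨x, Matrix.toLin'_apply _ _⟩
    obtain ⟨zz, hz⟩ := hmem
    rw [Matrix.toLin'_apply] at hz
    have hst : star x ᵥ* ρhat = star (ρhat *ᵥ x) := by rw [star_mulVec, hρhat1.1.eq]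
    have hq : star x ⬝ᵥ ρ *ᵥ x = 0 := by
      rw [← hz, dotProduct_mulVec, hst, hx]
      simp
    exact (hρ1.dotProduct_mulVec_zero_iff x).mp hq
  obtain ⟨c, hc, hcPSD⟩ := RobustAux.exists_smul_sub_posSemidef hρ1 hρhat1 hker
  set Q : Matrix (Fin n) (Fin n) ℂ := 1 - Pr with hQdef
  have hQH : Qᴴ = Q := by rw [hQdef, conjTranspose_sub, conjTranspose_one, hPrH]
  have hQQ : Q * Q = Q := by
    rw [hQdef, Matrix.sub_mul, Matrix.one_mul, Matrix.mul_sub, Matrix.mul_one, hPrP, sub_self,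
      sub_zero]
  have hQpsd : Q.PosSemidef := by
    have h := Matrix.posSemidef_conjTranspose_mul_self Q
    rwa [hQH, hQQ] at h
  have hPrρbar : Pr * ρbar = ρbar := by
    refine RobustAux.eq_of_forall_mulVec fun x => ?_
    have hmem : ρbar *ᵥ x ∈ LinearMap.range (Matrix.toLin' Pr) := by
      rw [hPrR]; exact ⟨x, Matrix.toLin'_apply _ _⟩
    obtain ⟨zz, hz⟩ := hmem
    rw [Matrix.toLin'_apply] at hz
    rw [← Matrix.mulVec_mulVec, ← hz, Matrix.mulVec_mulVec, hPrP, hz]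
  have hQρbar : Q * ρbar = 0 := by
    rw [hQdef, Matrix.sub_mul, Matrix.one_mul, hPrρbar, sub_self]
  have traceQ : ∀ X : Matrix (Fin n) (Fin n) ℂ, X.PosSemidef → 0 ≤ (Q * X).trace := by
    intro X hX
    have h1 : (Q * X * Qᴴ).PosSemidef := hX.mul_mul_conjTranspose_same Q
    rw [hQH] at h1
    have h2 : (Q * X * Q).trace = (Q * X).trace := by
      rw [Matrix.trace_mul_comm (Q * X) Q, ← Matrix.mul_assoc, hQQ]
    calc (0:ℂ) ≤ (Q * X * Q).trace := RobustAux.trace_nonneg_of_posSemidef h1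
      _ = (Q * X).trace := h2
  set f : ℝ → ℂ := fun t => (Q * E t ρ).trace with hfdef
  set g : ℝ → ℂ := fun t => (Q * E t ρhat).trace with hgdef
  have hgl : Tendsto g atTop (nhds 0) := by
    have hcont : Continuous (fun X : Matrix (Fin n) (Fin n) ℂ => (Q * X).trace) := by
      have he : (fun X : Matrix (Fin n) (Fin n) ℂ => (Q * X).trace)
          = (Matrix.traceLinearMap (Fin n) ℂ ℂ).comp (LinearMap.mulLeft ℂ Q) := rfl
      rw [he]
      exact LinearMap.continuous_of_finiteDimensional _
    have h := (hcont.tendsto ρbar).comp hlim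
    simpa [hgdef, Function.comp_def, hQρbar] using h
  have hfpos : ∀ t, 0 ≤ t → 0 ≤ f t := fun t ht => traceQ _ (hpos t ht ρ hρ1)
  have hfg : ∀ t, 0 ≤ t → f t ≤ (c:ℂ) * g t := by
    intro t ht
    have hmap : (c:ℂ) • E t ρhat - E t ρ = E t ((c:ℂ) • ρhat - ρ) := by
      rw [map_sub, _root_.map_smul]
    have hpsd : ((c:ℂ) • E t ρhat - E t ρ).PosSemidef := by
      rw [hmap]; exact hpos t ht _ hcPSD
    have h0 : 0 ≤ (Q * ((c:ℂ) • E t ρhat - E t ρ)).trace := traceQ _ hpsd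
    have hexp : (Q * ((c:ℂ) • E t ρhat - E t ρ)).trace = (c:ℂ) * g t - f t := by
      rw [Matrix.mul_sub, Matrix.mul_smul, Matrix.trace_sub, Matrix.trace_smul, smul_eq_mul]
    rw [hexp] at h0
    exact sub_nonneg.mp h0
  have hgre : Tendsto (fun t => (g t).re) atTop (nhds 0) := by
    have h := (Complex.continuous_re.tendsto 0).comp hgl
    simpa [Function.comp_def] using h
  have hfre : Tendsto (fun t => (f t).re) atTop (nhds 0) := by
    refine tendsto_of_tendsto_of_tendsto_of_le_of_le' tendsto_const_nhds
      (by simpa using hgre.const_mul c) ?_ ?_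
    · filter_upwards [eventually_ge_atTop (0:ℝ)] with t ht
      exact (Complex.le_def.mp (hfpos t ht)).1
    · filter_upwards [eventually_ge_atTop (0:ℝ)] with t ht
      have h := (Complex.le_def.mp (hfg t ht)).1
      simpa [Complex.re_ofReal_mul] using h
  have hfim : ∀ᶠ t in atTop, f t = ((f t).re : ℂ) := by
    filter_upwards [eventually_ge_atTop (0:ℝ)] with t ht
    have h := (Complex.le_def.mp (hfpos t ht)).2
    apply Complex.ext
    · simp
    · simpa using h.symm
  have hfl : Tendsto f atTop (nhds 0) := by
    have h := (Complex.continuous_ofReal.tendsto 0).comp hfre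
    simp only [Function.comp_def, Complex.ofReal_zero] at h
    exact Tendsto.congr' (hfim.mono fun t ht => ht.symm) h
  have hfinal : ∀ᶠ t in atTop, (Pr * E t ρ).trace = 1 - f t := by
    filter_upwards [eventually_ge_atTop (0:ℝ)] with t ht
    have hPrQ : Pr = 1 - Q := by rw [hQdef]; abel
    rw [hPrQ, Matrix.sub_mul, Matrix.one_mul, Matrix.trace_sub, htp t ht ρ, hρ2]
  have hlast : Tendsto (fun t => 1 - f t) atTop (nhds 1) := by
    simpa using (tendsto_const_nhds (x := (1:ℂ)) (f := atTop)).sub hfl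
  exact Tendsto.congr' (hfinal.mono fun t ht => ht.symm) hlast
end

section
/- Let (E_t)_{t ≥ 0} be a family of linear maps on the n×n complex matrices, each positive (mapping positive semidefinite matrices to positive semidefinite matrices) and trace-preserving. Let ρ̂_0 be a positive definite density matrix and let ρ̄ be a rank-one orthogonal projection (a pure state), and suppose E_t(ρ̂_0) → ρ̄ as t → ∞. Then for every density matrix ρ_0, E_t(ρ_0) → ρ̄ as t → ∞. -/
open Filter Matrix
open scoped ComplexOrder

section PTGAAux
variable {n : ℕ}

open scoped MatrixOrder Matrix.Norms.L2Operator in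
lemma posSemidef_iff_eq_transpose_mul_self {A : Matrix (Fin n) (Fin n) ℂ} :
    A.PosSemidef ↔ ∃ B : Matrix (Fin n) (Fin n) ℂ, A = Bᴴ * B := by
  constructor
  · intro hA
    obtain ⟨B, rfl⟩ := CStarAlgebra.nonneg_iff_eq_star_mul_self.mp hA.nonneg
    exact ⟨B, rfl⟩
  · rintro ⟨B, rfl⟩
    exact posSemidef_conjTranspose_mul_self B

lemma trace_ct_mul_self' (A : Matrix (Fin n) (Fin n) ℂ) :
    (Aᴴ * A).trace = ((∑ i, ∑ j, ‖A i j‖^2 : ℝ) : ℂ) := by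
  rw [Matrix.trace]
  push_cast
  rw [Finset.sum_comm]
  refine Finset.sum_congr rfl fun j _ => ?_
  rw [Matrix.diag_apply, Matrix.mul_apply]
  refine Finset.sum_congr rfl fun i _ => ?_
  rw [Matrix.conjTranspose_apply, Complex.star_def, ← Complex.normSq_eq_conj_mul_self,
    Complex.normSq_eq_norm_sq]
  push_cast
  ring

lemma trace_mul_psd' {A B : Matrix (Fin n) (Fin n) ℂ}
    (hA : A.PosSemidef) (hB : B.PosSemidef) :
    ∃ r : ℝ, 0 ≤ r ∧ (A * B).trace = (r : ℂ) := by
  obtain ⟨C, rfl⟩ := posSemidef_iff_eq_transpose_mul_self.mp hA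
  obtain ⟨D, rfl⟩ := posSemidef_iff_eq_transpose_mul_self.mp hB
  refine ⟨∑ i, ∑ j, ‖(C * Dᴴ) i j‖^2, by positivity, ?_⟩
  rw [← trace_ct_mul_self', Matrix.conjTranspose_mul, Matrix.conjTranspose_conjTranspose,
    Matrix.trace_mul_comm]
  have e : Dᴴ * D * (Cᴴ * C) = Dᴴ * (D * Cᴴ * C) := by noncomm_ring
  rw [e, Matrix.trace_mul_comm]
  congr 1
  noncomm_ring

lemma psd_smul' {M : Matrix (Fin n) (Fin n) ℂ} (hM : M.PosSemidef) {r : ℝ} (hr : 0 ≤ r) :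
    ((r : ℂ) • M).PosSemidef := by
  constructor
  · unfold Matrix.IsHermitian
    rw [Matrix.conjTranspose_smul, hM.1]
    congr 1
    simp
  · exact (hM.smul (Complex.zero_le_real.mpr hr)).2

lemma trace_eq_sum_eigenvalues' {X : Matrix (Fin n) (Fin n) ℂ} (hX : X.IsHermitian) :
    X.trace = ((∑ i, hX.eigenvalues i : ℝ) : ℂ) := by
  conv_lhs => rw [hX.spectral_theorem, Unitary.conjStarAlgAut_apply]
  rw [Matrix.trace_mul_comm, ← Matrix.mul_assoc,
    (Matrix.mem_unitaryGroup_iff').mp hX.eigenvectorUnitary.2, Matrix.one_mul,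
    Matrix.trace_diagonal]
  push_cast
  rfl

lemma smul_one_sub_psd' {X : Matrix (Fin n) (Fin n) ℂ} (hX : X.PosSemidef)
    {r : ℝ} (hr : ∀ i, hX.1.eigenvalues i ≤ r) :
    ((r : ℂ) • 1 - X).PosSemidef := by
  have hU : (hX.1.eigenvectorUnitary : Matrix (Fin n) (Fin n) ℂ) *
      star (hX.1.eigenvectorUnitary : Matrix (Fin n) (Fin n) ℂ) = 1 :=
    (Matrix.mem_unitaryGroup_iff).mp hX.1.eigenvectorUnitary.2
  set U : Matrix (Fin n) (Fin n) ℂ := (hX.1.eigenvectorUnitary : Matrix (Fin n) (Fin n) ℂ)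
  have key : (r : ℂ) • 1 - X =
      U * (diagonal fun i => ((r - hX.1.eigenvalues i : ℝ) : ℂ)) * star U := by
    conv_lhs => rw [hX.1.spectral_theorem, Unitary.conjStarAlgAut_apply]
    have h1 : ((r:ℂ) • (1 : Matrix (Fin n) (Fin n) ℂ)) = U * ((r:ℂ) • 1) * star U := by
      rw [Matrix.mul_smul, Matrix.mul_one, Matrix.smul_mul, hU]
    rw [h1, ← Matrix.sub_mul, ← Matrix.mul_sub, Matrix.smul_one_eq_diagonal,
      Matrix.diagonal_sub]
    congr 2
    ext i
    push_cast
    rfl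
  rw [key, Matrix.star_eq_conjTranspose]
  exact Matrix.PosSemidef.mul_mul_conjTranspose_same
    (Matrix.PosSemidef.diagonal fun i => Complex.zero_le_real.mpr (by linarith [hr i])) U

lemma sub_smul_one_psd' {X : Matrix (Fin n) (Fin n) ℂ} (hX : X.PosSemidef)
    {r : ℝ} (hr : ∀ i, r ≤ hX.1.eigenvalues i) :
    (X - (r : ℂ) • 1).PosSemidef := by
  have hU : (hX.1.eigenvectorUnitary : Matrix (Fin n) (Fin n) ℂ) *
      star (hX.1.eigenvectorUnitary : Matrix (Fin n) (Fin n) ℂ) = 1 :=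
    (Matrix.mem_unitaryGroup_iff).mp hX.1.eigenvectorUnitary.2
  set U : Matrix (Fin n) (Fin n) ℂ := (hX.1.eigenvectorUnitary : Matrix (Fin n) (Fin n) ℂ)
  have key : X - (r : ℂ) • 1 =
      U * (diagonal fun i => ((hX.1.eigenvalues i - r : ℝ) : ℂ)) * star U := by
    conv_lhs => rw [hX.1.spectral_theorem, Unitary.conjStarAlgAut_apply]
    have h1 : ((r:ℂ) • (1 : Matrix (Fin n) (Fin n) ℂ)) = U * ((r:ℂ) • 1) * star U := by
      rw [Matrix.mul_smul, Matrix.mul_one, Matrix.smul_mul, hU]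
    rw [h1, ← Matrix.sub_mul, ← Matrix.mul_sub, Matrix.smul_one_eq_diagonal,
      Matrix.diagonal_sub]
    congr 2
    ext i
    push_cast
    rfl
  rw [key, Matrix.star_eq_conjTranspose]
  exact Matrix.PosSemidef.mul_mul_conjTranspose_same
    (Matrix.PosSemidef.diagonal fun i => Complex.zero_le_real.mpr (by linarith [hr i])) U


lemma one_sub_psd' {X : Matrix (Fin n) (Fin n) ℂ} (hX : X.PosSemidef) (htr : X.trace = 1) :
    ((1 : Matrix (Fin n) (Fin n) ℂ) - X).PosSemidef := by
  have hr : ∀ i, hX.1.eigenvalues i ≤ (1:ℝ) := by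
    intro i
    have hsum : ∑ j, hX.1.eigenvalues j = 1 := by
      have h2 := trace_eq_sum_eigenvalues' hX.1
      rw [htr] at h2
      exact_mod_cast h2.symm
    calc hX.1.eigenvalues i ≤ ∑ j, hX.1.eigenvalues j :=
          Finset.single_le_sum (f := fun j => hX.1.eigenvalues j)
            (fun j _ => hX.eigenvalues_nonneg j) (Finset.mem_univ i)
      _ = 1 := hsum
  have h := smul_one_sub_psd' hX hr
  simpa using h

end PTGAAux

/-- Corollary on robustness with respect to initialization: if a family of
trace-preserving positive linear maps drives a full-rank (positive definite)
density matrix `ρ̂₀` to a pure target state `ρ̄` (a rank-one orthogonal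
projection), then it drives every density matrix to `ρ̄`. -/
theorem pure_target_globally_attractive {n : ℕ}
    (E : ℝ → (Matrix (Fin n) (Fin n) ℂ →ₗ[ℂ] Matrix (Fin n) (Fin n) ℂ))
    (hpos : ∀ t : ℝ, 0 ≤ t → ∀ X : Matrix (Fin n) (Fin n) ℂ,
      X.PosSemidef → (E t X).PosSemidef)
    (htp : ∀ t : ℝ, 0 ≤ t → ∀ X : Matrix (Fin n) (Fin n) ℂ,
      (E t X).trace = X.trace)
    (ρhat ρbar : Matrix (Fin n) (Fin n) ℂ)
    (hρhat : ρhat.PosDef ∧ ρhat.trace = 1)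
    (hρbar : ρbarᴴ = ρbar ∧ ρbar * ρbar = ρbar ∧ ρbar.trace = 1)
    (hlim : Tendsto (fun t => E t ρhat) atTop (nhds ρbar)) :
    ∀ ρ : Matrix (Fin n) (Fin n) ℂ, ρ.PosSemidef → ρ.trace = 1 →
      Tendsto (fun t => E t ρ) atTop (nhds ρbar) := by
  obtain ⟨hρhatPD, hρhatTr⟩ := hρhat
  obtain ⟨hPH, hPP, hPTr⟩ := hρbar
  intro ρ hρ hρtr
  haveI hne : Nonempty (Fin n) := by
    by_contra h
    rw [not_nonempty_iff] at h
    have h0 : ρbar.trace = 0 := by simp [Matrix.trace]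
    rw [h0] at hPTr
    exact one_ne_zero hPTr.symm
  have hPpsd : ρbar.PosSemidef :=
    posSemidef_iff_eq_transpose_mul_self.mpr ⟨ρbar, by rw [hPH, hPP]⟩
  have hQpsd : ((1 : Matrix (Fin n) (Fin n) ℂ) - ρbar).PosSemidef := by
    refine posSemidef_iff_eq_transpose_mul_self.mpr ⟨1 - ρbar, ?_⟩
    rw [Matrix.conjTranspose_sub, Matrix.conjTranspose_one, hPH,
      Matrix.mul_sub, Matrix.mul_one, Matrix.sub_mul, Matrix.one_mul, hPP]
    abel
  have hS := hρhatPD.posSemidef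
  obtain ⟨c, hcpos, hc_le⟩ : ∃ c : ℝ, 0 < c ∧ ∀ i, c ≤ hS.1.eigenvalues i := by
    refine ⟨Finset.univ.inf' Finset.univ_nonempty hS.1.eigenvalues, ?_, ?_⟩
    · rw [Finset.lt_inf'_iff]
      intro i _
      exact hρhatPD.eigenvalues_pos i
    · intro i
      exact Finset.inf'_le _ (Finset.mem_univ i)
  have hDpsd : (ρhat - (c : ℂ) • ρ).PosSemidef := by
    have h1 : (ρhat - (c : ℂ) • 1).PosSemidef := sub_smul_one_psd' hS hc_le
    have h2 : ((c : ℂ) • ((1 : Matrix (Fin n) (Fin n) ℂ) - ρ)).PosSemidef :=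
      psd_smul' (one_sub_psd' hρ hρtr) hcpos.le
    have heq : ρhat - (c : ℂ) • ρ = (ρhat - (c : ℂ) • 1) + (c : ℂ) • (1 - ρ) := by
      rw [smul_sub]; abel
    rw [heq]; exact h1.add h2
  set g : ℝ → ℝ := fun t => (((1 - ρbar) * (E t ρhat)).trace).re with hgdef
  have hglim : Tendsto g atTop (nhds 0) := by
    have hcont : Continuous fun X : Matrix (Fin n) (Fin n) ℂ =>
        (((1 - ρbar) * X).trace).re :=
      Complex.continuous_re.comp ((continuous_const.matrix_mul continuous_id).matrix_trace)
    have h1 := (hcont.tendsto ρbar).comp hlim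
    have h2 : ((1 : Matrix (Fin n) (Fin n) ℂ) - ρbar) * ρbar = 0 := by
      rw [Matrix.sub_mul, Matrix.one_mul, hPP, sub_self]
    simpa [hgdef, h2, Function.comp_def] using h1
  -- entrywise bound
  have key : ∀ t : ℝ, 0 ≤ t → ∀ i j,
      ‖(E t ρ) i j - ρbar i j‖ ≤ Real.sqrt (2 * (g t / c)) := by
    intro t ht i j
    set A := E t ρ with hAdef
    have hA : A.PosSemidef := hpos t ht ρ hρ
    have htA : A.trace = 1 := by rw [hAdef, htp t ht ρ, hρtr]
    obtain ⟨a, ha0, haeq⟩ := trace_mul_psd' hQpsd hA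
    -- c * a ≤ g t
    have hca : c * a ≤ g t := by
      have hdiff : ((E t ρhat) - (c : ℂ) • A).PosSemidef := by
        have heq : (E t ρhat) - (c : ℂ) • A = E t (ρhat - (c : ℂ) • ρ) := by
          rw [map_sub]
          congr 1
          exact ((E t).map_smul (c : ℂ) ρ).symm
        rw [heq]; exact hpos t ht _ hDpsd
      obtain ⟨s, hs0, hseq⟩ := trace_mul_psd' hQpsd hdiff
      have hexp : ((1 - ρbar) * ((E t ρhat) - (c : ℂ) • A)).trace
          = ((1 - ρbar) * (E t ρhat)).trace - (c : ℂ) * ((1 - ρbar) * A).trace := by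
        rw [Matrix.mul_sub, Matrix.mul_smul, Matrix.trace_sub, Matrix.trace_smul]
        simp [smul_eq_mul]
      rw [hexp, haeq] at hseq
      have htr2 : ((1 - ρbar) * (E t ρhat)).trace = ((s + c * a : ℝ) : ℂ) := by
        push_cast
        linear_combination hseq
      have hgt : g t = s + c * a := by
        simp only [hgdef]
        rw [htr2, Complex.ofReal_re]
      linarith
    -- sum of squares ≤ 2 a
    have hMH : (A - ρbar)ᴴ = A - ρbar := by
      rw [Matrix.conjTranspose_sub, hA.1, hPH]
    obtain ⟨u, hu0, hueq⟩ := trace_mul_psd' hA (one_sub_psd' hA htA)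
    have htAA : (A * A).trace = 1 - (u : ℂ) := by
      have : (A * ((1 : Matrix (Fin n) (Fin n) ℂ) - A)).trace
          = A.trace - (A * A).trace := by
        rw [Matrix.mul_sub, Matrix.mul_one, Matrix.trace_sub]
      rw [this, htA] at hueq
      linear_combination -hueq
    have hsum_eq : ((∑ i', ∑ j', ‖(A - ρbar) i' j'‖^2 : ℝ) : ℂ)
        = (A * A).trace - 2 * (ρbar * A).trace + 1 := by
      rw [← trace_ct_mul_self' (A - ρbar), hMH]
      have hexpand : (A - ρbar) * (A - ρbar)
          = A * A - A * ρbar - ρbar * A + ρbar * ρbar := by noncomm_ring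
      rw [hexpand, hPP, Matrix.trace_add, Matrix.trace_sub, Matrix.trace_sub,
        Matrix.trace_mul_comm A ρbar, hPTr]
      ring
    have haPA : (a : ℂ) = 1 - (ρbar * A).trace := by
      rw [← haeq, Matrix.sub_mul, Matrix.one_mul, Matrix.trace_sub, htA]
    have hsumle : (∑ i', ∑ j', ‖(A - ρbar) i' j'‖^2 : ℝ) ≤ 2 * a := by
      have htPA : (ρbar * A).trace = 1 - (a : ℂ) := by
        rw [haPA]; ring
      have hsum_eq' : ((∑ i', ∑ j', ‖(A - ρbar) i' j'‖^2 : ℝ) : ℂ)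
          = ((2 * a - u : ℝ) : ℂ) := by
        rw [hsum_eq, htAA, htPA]; push_cast; ring
      have hsums := Complex.ofReal_inj.mp hsum_eq'
      linarith [hsums, hu0]
    have hentry : ‖(A - ρbar) i j‖^2 ≤ 2 * (g t / c) := by
      have hle : ‖(A - ρbar) i j‖^2 ≤ ∑ i', ∑ j', ‖(A - ρbar) i' j'‖^2 := by
        have h1 : ‖(A - ρbar) i j‖^2 ≤ ∑ j', ‖(A - ρbar) i j'‖^2 :=
          Finset.single_le_sum (f := fun j' => ‖(A - ρbar) i j'‖^2)
            (fun k _ => by positivity) (Finset.mem_univ j)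
        refine h1.trans ?_
        exact Finset.single_le_sum (f := fun i' => ∑ j', ‖(A - ρbar) i' j'‖^2)
          (fun k _ => by positivity) (Finset.mem_univ i)
      have : a ≤ g t / c := by
        rw [le_div_iff₀ hcpos]
        linarith [hca]
      linarith [hsumle, hle]
    have hb0 : (0:ℝ) ≤ 2 * (g t / c) := le_trans (by positivity) hentry
    have hfin : ‖(A - ρbar) i j‖ ≤ Real.sqrt (2 * (g t / c)) := by
      rw [Real.le_sqrt (norm_nonneg _)]
      · exact hentry
      · exact hb0
    simpa [Matrix.sub_apply] using hfin
  -- conclude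
  have hbt : Tendsto (fun t => Real.sqrt (2 * (g t / c))) atTop (nhds 0) := by
    have h1 : Tendsto (fun t => 2 * (g t / c)) atTop (nhds (2 * (0 / c))) :=
      (hglim.div_const c).const_mul 2
    have h2 := h1.sqrt
    simpa using h2
  have hentrylim : ∀ i j, Tendsto (fun t => (E t ρ) i j) atTop (nhds (ρbar i j)) := by
    intro i j
    rw [tendsto_iff_norm_sub_tendsto_zero]
    refine squeeze_zero' (Eventually.of_forall fun t => norm_nonneg _) ?_ hbt
    filter_upwards [eventually_ge_atTop (0:ℝ)] with t ht
    exact key t ht i j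
  exact tendsto_pi_nhds.mpr fun i => tendsto_pi_nhds.mpr fun j => hentrylim i j
end
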